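/- arXiv:0912.4512 — 6 statements merged into one kernel-verified Lean document; each statement's English description precedes it below -/
import Mathlib

section
/- Let R be a commutative ring, G a finite group whose order is invertible in R, and M an R-module equipped with an action of G by R-linear automorphisms. Then for every commutative R-algebra S, the canonical S-linear map (M^G) ⊗_R S → (M ⊗_R S)^G induced by the inclusion M^G ⊆ M is bijective, where G acts on M ⊗_R S through the first tensor factor. -/
open TensorProduct

/-- The submodule of elements fixed by every operator in a family of linear
endomorphisms. -/
def fixedSubmodule {R M G : Type*} [CommRing R] [AddCommGroup M] [Module R M]
    (act : G → (M →ₗ[R] M)) : Submodule R M where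
  carrier := {m | ∀ g, act g m = m}
  add_mem' := by
    intro a b ha hb g
    rw [map_add, ha g, hb g]
  zero_mem' := by
    intro g
    rw [map_zero]
  smul_mem' := by
    intro r m hm g
    rw [map_smul, hm g]

private lemma aux_inv_card_smul {R : Type*} [CommRing R] {N : Type*} [AddCommGroup N]
    [Module R N] (u : Rˣ) {n : ℕ} (hu : (u : R) = n) (x : N) :
    (↑u⁻¹ : R) • (n : ℕ) • x = x := by
  rw [← Nat.cast_smul_eq_nsmul R, smul_smul, ← hu, Units.inv_mul, one_smul]

/-- Let `R` be a commutative ring, `G` a finite group whose order is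
invertible in `R`, and `M` an `R`-module with an action of `G` by `R`-linear
automorphisms.  Then for every commutative `R`-algebra `S`, the canonical map
`(M^G) ⊗[R] S → (M ⊗[R] S)^G` induced by the inclusion `M^G ⊆ M` is bijective, where `G`
acts on `M ⊗[R] S` through the first tensor factor: the map `(M^G) ⊗[R] S → M ⊗[R] S` is
injective with range exactly the invariants of `M ⊗[R] S`. -/
theorem invariants_tensor_base_change
    {R G M : Type*} [CommRing R] [Group G] [Finite G]
    (hG : IsUnit (Nat.card G : R))
    [AddCommGroup M] [Module R M] (ρ : G →* (M ≃ₗ[R] M))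
    (S : Type*) [CommRing S] [Algebra R S] :
    Function.Injective
      (LinearMap.rTensor S (fixedSubmodule (fun g : G => (ρ g).toLinearMap)).subtype) ∧
    LinearMap.range
        (LinearMap.rTensor S (fixedSubmodule (fun g : G => (ρ g).toLinearMap)).subtype) =
      fixedSubmodule (fun g : G => LinearMap.rTensor S (ρ g).toLinearMap) := by
  classical
  have : Fintype G := Fintype.ofFinite G
  obtain ⟨u, hu⟩ := hG
  have hu' : (u : R) = (Fintype.card G : ℕ) := by
    rw [hu, Nat.card_eq_fintype_card]
  set F : Submodule R M := fixedSubmodule (fun g : G => (ρ g).toLinearMap) with hF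
  -- the averaging operator
  set avg : M →ₗ[R] M := (↑u⁻¹ : R) • ∑ g : G, (ρ g).toLinearMap with havg
  -- avg lands in the fixed submodule
  have havg_mem : ∀ m : M, avg m ∈ F := by
    intro m g
    show (ρ g).toLinearMap (avg m) = avg m
    simp only [havg, LinearMap.smul_apply, LinearMap.sum_apply, map_smul, map_sum,
      LinearEquiv.coe_coe]
    congr 1
    refine Fintype.sum_equiv (Equiv.mulLeft g) _ _ (fun h => ?_)
    show (ρ g) ((ρ h) m) = (ρ (g * h)) m
    rw [map_mul]; rfl
  -- avg fixes fixed elements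
  have havg_fix : ∀ m : M, m ∈ F → avg m = m := by
    intro m hm
    simp only [havg, LinearMap.smul_apply, LinearMap.sum_apply]
    rw [Finset.sum_congr rfl (fun g _ => hm g), Finset.sum_const, Finset.card_univ]
    exact aux_inv_card_smul u hu' m
  set p : M →ₗ[R] F := avg.codRestrict F havg_mem with hp
  have hpe : p ∘ₗ F.subtype = LinearMap.id := by
    ext m
    exact havg_fix m m.2
  have hlinv : ∀ x : F ⊗[R] S,
      LinearMap.rTensor S p (LinearMap.rTensor S F.subtype x) = x := by
    intro x
    rw [← LinearMap.rTensor_comp_apply, hpe, LinearMap.rTensor_id, LinearMap.id_apply]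
  have hinj : Function.Injective (LinearMap.rTensor S F.subtype) := by
    intro x y hxy
    rw [← hlinv x, ← hlinv y, hxy]
  refine ⟨hinj, ?_⟩
  apply le_antisymm
  · rintro _ ⟨x, rfl⟩ g
    rw [← LinearMap.rTensor_comp_apply]
    have h : (ρ g).toLinearMap ∘ₗ F.subtype = F.subtype :=
      LinearMap.ext fun m => m.2 g
    rw [h]
  · intro x hx
    refine ⟨LinearMap.rTensor S p x, ?_⟩
    rw [← LinearMap.rTensor_comp_apply]
    have hc : F.subtype ∘ₗ p = avg := rfl
    rw [hc, havg, LinearMap.rTensor_smul]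
    have hsum : (∑ g : G, (ρ g).toLinearMap).rTensor S x
        = ∑ g : G, LinearMap.rTensor S (ρ g).toLinearMap x := by
      rw [← LinearMap.coe_rTensorHom, map_sum]
      simp
    rw [LinearMap.smul_apply, hsum, Finset.sum_congr rfl (fun g _ => hx g),
      Finset.sum_const, Finset.card_univ]
    exact aux_inv_card_smul u hu' x
end

section
/- Let k be a field, n ≥ 1, and A = k[x₁,…,xₙ] the polynomial ring, and let W be a finite group with |W| invertible in k acting on A by k-algebra automorphisms that stabilize the space of linear forms (a linear action). Assume: (i) there exist homogeneous, algebraically independent polynomials σ₁,…,σₙ such that the invariant ring A^W is generated as a k-algebra by σ₁,…,σₙ; (ii) the Jacobian J = det(∂σᵢ/∂xⱼ) is nonzero; (iii) every p ∈ A satisfying w·p = det(w)·p for all w ∈ W (where det(w) is the determinant of the linear action of w on the space of linear forms) is of the form q·J with q ∈ A^W. Then the W-invariant elements of the module of Kähler differentials Ω¹_{A/k} are exactly the elements of the A^W-submodule generated by dσ₁,…,dσₙ. -/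
open MvPolynomial Matrix

lemma exists_single_of_degree_one {ι : Type*} {d : ι →₀ ℕ} (hd : d.degree = 1) :
    ∃ j, d = Finsupp.single j 1 := by
  classical
  obtain ⟨j, hj⟩ : d.support.Nonempty := by
    rw [Finsupp.support_nonempty_iff]
    rintro rfl
    simp [map_zero] at hd
  refine ⟨j, ?_⟩
  have hj1 : 1 ≤ d j := Nat.one_le_iff_ne_zero.2 (Finsupp.mem_support_iff.1 hj)
  have hle : d j ≤ d.degree := by
    rw [Finsupp.degree]
    exact Finset.single_le_sum (fun i _ => Nat.zero_le _) hj
  ext i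
  rcases eq_or_ne i j with rfl | hij
  · simp only [Finsupp.single_eq_same]
    omega
  · rw [Finsupp.single_eq_of_ne' (Ne.symm hij)]
    by_contra h
    have hi : i ∈ d.support := Finsupp.mem_support_iff.2 h
    have hsub : ({i, j} : Finset ι) ⊆ d.support := by
      intro x hx
      simp only [Finset.mem_insert, Finset.mem_singleton] at hx
      rcases hx with rfl | rfl <;> assumption
    have h2 : d i + d j ≤ d.degree := by
      rw [Finsupp.degree, ← Finset.sum_pair hij]
      exact Finset.sum_le_sum_of_subset hsub
    omega

lemma homog_one_eq_sum {k : Type*} [CommSemiring k] {ι : Type*} [Fintype ι] [DecidableEq ι]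
    {p : MvPolynomial ι k} (hp : p.IsHomogeneous 1) :
    p = ∑ j, MvPolynomial.C (MvPolynomial.coeff (Finsupp.single j 1) p) * MvPolynomial.X j := by
  ext d
  rw [MvPolynomial.coeff_sum]
  simp only [MvPolynomial.coeff_C_mul, MvPolynomial.coeff_X']
  by_cases hd : d.degree = 1
  · obtain ⟨j0, rfl⟩ := exists_single_of_degree_one hd
    rw [Finset.sum_eq_single j0 (fun b _ hb => by
        rw [if_neg fun h => hb ((Finsupp.single_left_inj one_ne_zero).1 h), mul_zero])
      (fun h => absurd (Finset.mem_univ j0) h)]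
    simp
  · rw [hp.coeff_eq_zero hd]
    symm
    apply Finset.sum_eq_zero
    intro j _
    rw [if_neg, mul_zero]
    rintro rfl
    exact hd (by
      rw [Finsupp.degree_single])

lemma coeff_sum_CX {k : Type*} [CommSemiring k] {n : ℕ} (c : Fin n → k) (l : Fin n) :
    MvPolynomial.coeff (Finsupp.single l 1)
      (∑ j, MvPolynomial.C (c j) * MvPolynomial.X j : MvPolynomial (Fin n) k) = c l := by
  rw [MvPolynomial.coeff_sum]
  simp only [MvPolynomial.coeff_C_mul, MvPolynomial.coeff_X']
  rw [Finset.sum_eq_single l (fun b _ hb => by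
      rw [if_neg fun h => hb ((Finsupp.single_left_inj one_ne_zero).1 h), mul_zero])
    (fun h => absurd (Finset.mem_univ l) h)]
  simp

set_option maxHeartbeats 2000000 in
/-- Let `k` be a field, `A = k[x₁,…,xₙ]` (`n ≥ 1`), and `W` a finite
group of order invertible in `k` acting linearly on `A` by `k`-algebra automorphisms
(stabilizing the space of linear forms).  Assume: (i) the invariant ring `A^W` is
generated by homogeneous, algebraically independent polynomials `σ₁,…,σₙ`;
(ii) the Jacobian `J = det(∂σᵢ/∂xⱼ)` is nonzero; (iii) every `p` with
`w·p = det(w)·p` for all `w` is of the form `q·J` with `q ∈ A^W`.  Then the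
`W`-invariant Kähler differentials of `A` over `k` (for the functorial action
`θ w (d a) = d (w·a)`) are exactly the `A^W`-linear combinations of `dσ₁,…,dσₙ`. -/
theorem invariant_differentials_eq_span_of_dsigma
    {k : Type*} [Field k] (n : ℕ) (hn : 1 ≤ n)
    {W : Type*} [Group W] [Finite W] (hW : (Nat.card W : k) ≠ 0)
    (ρ : W →* (MvPolynomial (Fin n) k ≃ₐ[k] MvPolynomial (Fin n) k))
    -- the action is linear: it stabilizes the space of linear forms
    (hlin : ∀ (w : W) (p : MvPolynomial (Fin n) k),
      p.IsHomogeneous 1 → (ρ w p).IsHomogeneous 1)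
    (σ : Fin n → MvPolynomial (Fin n) k)
    -- (i) the σᵢ are homogeneous, algebraically independent, and generate `A^W`
    (hhom : ∀ i, ∃ d : ℕ, (σ i).IsHomogeneous d)
    (hai : AlgebraicIndependent k σ)
    (hgen : ∀ p : MvPolynomial (Fin n) k,
      (∀ w : W, ρ w p = p) ↔ p ∈ Algebra.adjoin k (Set.range σ))
    -- (ii) the Jacobian is nonzero
    (hJ : Matrix.det (Matrix.of fun i j => MvPolynomial.pderiv j (σ i)) ≠ 0)
    -- (iii) anti-invariants are `A^W`-multiples of the Jacobian
    (hanti : ∀ p : MvPolynomial (Fin n) k,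
      (∀ w : W, ρ w p =
        Matrix.det (Matrix.of fun i j =>
          MvPolynomial.coeff (Finsupp.single j 1) (ρ w (MvPolynomial.X i))) • p) →
      ∃ q : MvPolynomial (Fin n) k, (∀ w : W, ρ w q = q) ∧
        p = q * Matrix.det (Matrix.of fun i j => MvPolynomial.pderiv j (σ i)))
    -- the functorial action of `W` on the Kähler differentials
    (θ : W → (KaehlerDifferential k (MvPolynomial (Fin n) k) →+
        KaehlerDifferential k (MvPolynomial (Fin n) k)))
    (hθD : ∀ (w : W) (a : MvPolynomial (Fin n) k),
      θ w (KaehlerDifferential.D k (MvPolynomial (Fin n) k) a) =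
        KaehlerDifferential.D k (MvPolynomial (Fin n) k) (ρ w a))
    (hθs : ∀ (w : W) (a : MvPolynomial (Fin n) k)
        (ω : KaehlerDifferential k (MvPolynomial (Fin n) k)),
      θ w (a • ω) = (ρ w a) • θ w ω) :
    ∀ ω : KaehlerDifferential k (MvPolynomial (Fin n) k),
      (∀ w : W, θ w ω = ω) ↔
        ∃ c : Fin n → MvPolynomial (Fin n) k,
          (∀ i, ∀ w : W, ρ w (c i) = c i) ∧
          ω = ∑ i, c i • KaehlerDifferential.D k (MvPolynomial (Fin n) k) (σ i) := by
  classical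
  -- invariance of the σ i
  have hσinv : ∀ (w : W) i, ρ w (σ i) = σ i := fun w i =>
    ((hgen (σ i)).2 (Algebra.subset_adjoin (Set.mem_range_self i))) w
  -- the matrix of w on linear forms
  set M : W → Matrix (Fin n) (Fin n) k := fun w => Matrix.of fun i j =>
    MvPolynomial.coeff (Finsupp.single j 1) (ρ w (MvPolynomial.X i)) with hMdef
  set δ : W → k := fun w => (M w).det with hδdef
  set N : W → Matrix (Fin n) (Fin n) (MvPolynomial (Fin n) k) := fun w =>
    (M w).map (MvPolynomial.C : k →+* MvPolynomial (Fin n) k) with hNdef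
  -- decomposition of the action on linear forms
  have hXdec : ∀ (w : W) i, ρ w (MvPolynomial.X i)
      = ∑ j, MvPolynomial.C (M w i j) * MvPolynomial.X j := by
    intro w i
    exact homog_one_eq_sum (hlin w _ (MvPolynomial.isHomogeneous_X _ _))
  -- ρ fixes constants
  have hC : ∀ (w : W) (c : k), ρ w (MvPolynomial.C c) = MvPolynomial.C c := by
    intro w c
    rw [← MvPolynomial.algebraMap_eq]
    exact AlgEquiv.commutes _ _
  -- M is an antihomomorphism
  have hMone : M 1 = 1 := by
    ext i j
    show MvPolynomial.coeff (Finsupp.single j 1) (ρ 1 (MvPolynomial.X i)) = _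
    rw [map_one ρ]
    show MvPolynomial.coeff (Finsupp.single j 1) (MvPolynomial.X i) = _
    rw [MvPolynomial.coeff_X', Matrix.one_apply]
    by_cases h : i = j
    · rw [if_pos (by rw [h]), if_pos h]
    · rw [if_neg (fun hh => h ((Finsupp.single_left_inj one_ne_zero).1 hh)), if_neg h]
  have hMmul : ∀ w w', M (w * w') = M w' * M w := by
    intro w w'
    ext i l
    show MvPolynomial.coeff (Finsupp.single l 1) (ρ (w * w') (MvPolynomial.X i)) = _
    have h1 : ρ (w * w') (MvPolynomial.X i) = ρ w (ρ w' (MvPolynomial.X i)) := by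
      rw [_root_.map_mul ρ w w']; rfl
    have h2 : ρ w (ρ w' (MvPolynomial.X i))
        = ∑ t, MvPolynomial.C ((M w' * M w) i t) * MvPolynomial.X t := by
      rw [hXdec w' i, map_sum]
      have h3 : ∀ j, ρ w (MvPolynomial.C (M w' i j) * MvPolynomial.X j)
          = ∑ t, MvPolynomial.C (M w' i j * M w j t) * MvPolynomial.X t := by
        intro j
        rw [_root_.map_mul, hC, hXdec w j, Finset.mul_sum]
        exact Finset.sum_congr rfl fun t _ => by
          rw [← mul_assoc, ← MvPolynomial.C_mul]
      rw [Finset.sum_congr rfl fun j _ => h3 j, Finset.sum_comm]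
      refine Finset.sum_congr rfl fun t _ => ?_
      rw [← Finset.sum_mul, ← map_sum, Matrix.mul_apply]
    rw [h1, h2, coeff_sum_CX]
  -- δ is a homomorphism to k
  have hδmul : ∀ w w', δ (w * w') = δ w * δ w' := by
    intro w w'
    show (M (w * w')).det = (M w).det * (M w').det
    rw [hMmul, Matrix.det_mul, mul_comm]
  have hδone : δ 1 = 1 := by
    show (M 1).det = 1
    rw [hMone, Matrix.det_one]
  have hδpow : ∀ (w : W) (m : ℕ), δ (w ^ m) = δ w ^ m := by
    intro w m
    induction m with
    | zero => rw [pow_zero, pow_zero, hδone]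
    | succ m ih => rw [pow_succ, pow_succ, hδmul, ih]
  have hδcard : ∀ w : W, δ w ^ Nat.card W = 1 := by
    intro w
    have : Fintype W := Fintype.ofFinite W
    rw [← hδpow, Nat.card_eq_fintype_card, pow_card_eq_one, hδone]
  have hδunit : ∀ w : W, δ w * δ w⁻¹ = 1 := by
    intro w
    rw [← hδmul, mul_inv_cancel, hδone]
  -- D of C c * p
  have hDC : ∀ (c : k) (p : MvPolynomial (Fin n) k),
      KaehlerDifferential.D k (MvPolynomial (Fin n) k) (MvPolynomial.C c * p)
        = (MvPolynomial.C c : MvPolynomial (Fin n) k)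
            • KaehlerDifferential.D k (MvPolynomial (Fin n) k) p := by
    intro c p
    rw [Derivation.leibniz, ← MvPolynomial.algebraMap_eq, Derivation.map_algebraMap]
    simp
  have hsum_inj : ∀ c c' : Fin n → MvPolynomial (Fin n) k,
      (∑ l, c l • KaehlerDifferential.D k (MvPolynomial (Fin n) k) (MvPolynomial.X l))
        = (∑ l, c' l • KaehlerDifferential.D k (MvPolynomial (Fin n) k) (MvPolynomial.X l)) →
      c = c' := by
    intro c c' h
    have e : ∀ cc : Fin n → MvPolynomial (Fin n) k,
        (∑ l, cc l • (KaehlerDifferential.mvPolynomialBasis k (Fin n)) l)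
          = ∑ l, cc l • KaehlerDifferential.D k (MvPolynomial (Fin n) k) (MvPolynomial.X l) :=
      fun cc => Finset.sum_congr rfl fun l _ => by
        rw [KaehlerDifferential.mvPolynomialBasis_apply]
    have h1 := (KaehlerDifferential.mvPolynomialBasis k (Fin n)).repr_sum_self c
    have h2 := (KaehlerDifferential.mvPolynomialBasis k (Fin n)).repr_sum_self c'
    rw [e, h, ← e] at h1
    rw [h2] at h1
    exact h1.symm
  have hsum_repr : ∀ ω' : KaehlerDifferential k (MvPolynomial (Fin n) k),
      ω' = ∑ l, ((KaehlerDifferential.mvPolynomialBasis k (Fin n)).repr ω' l)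
        • KaehlerDifferential.D k (MvPolynomial (Fin n) k) (MvPolynomial.X l) := by
    intro ω'
    conv_lhs => rw [← (KaehlerDifferential.mvPolynomialBasis k (Fin n)).sum_repr ω']
    exact Finset.sum_congr rfl fun l _ => by
      rw [KaehlerDifferential.mvPolynomialBasis_apply]
  have hDX : ∀ (w : W) (l : Fin n),
      KaehlerDifferential.D k (MvPolynomial (Fin n) k) (ρ w (MvPolynomial.X l))
        = ∑ j, (MvPolynomial.C (M w l j) : MvPolynomial (Fin n) k)
            • KaehlerDifferential.D k (MvPolynomial (Fin n) k) (MvPolynomial.X j) := by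
    intro w l
    rw [hXdec w l, map_sum]
    exact Finset.sum_congr rfl fun j _ => hDC _ _
  have hθsum : ∀ (w : W) (c : Fin n → MvPolynomial (Fin n) k),
      θ w (∑ l, c l • KaehlerDifferential.D k (MvPolynomial (Fin n) k) (MvPolynomial.X l))
        = ∑ j, (∑ l, ρ w (c l) * MvPolynomial.C (M w l j))
            • KaehlerDifferential.D k (MvPolynomial (Fin n) k) (MvPolynomial.X j) := by
    intro w c
    rw [map_sum]
    have h1 : ∀ l, θ w (c l • KaehlerDifferential.D k (MvPolynomial (Fin n) k) (MvPolynomial.X l))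
        = ∑ j, (ρ w (c l) * MvPolynomial.C (M w l j))
            • KaehlerDifferential.D k (MvPolynomial (Fin n) k) (MvPolynomial.X j) := by
      intro l
      rw [hθs, hθD, hDX w l, Finset.smul_sum]
      exact Finset.sum_congr rfl fun j _ => by rw [smul_smul]
    rw [Finset.sum_congr rfl fun l _ => h1 l, Finset.sum_comm]
    exact Finset.sum_congr rfl fun j _ => (Finset.sum_smul).symm
  have hDσ : ∀ i, KaehlerDifferential.D k (MvPolynomial (Fin n) k) (σ i)
      = ∑ l, MvPolynomial.pderiv l (σ i)
          • KaehlerDifferential.D k (MvPolynomial (Fin n) k) (MvPolynomial.X l) := by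
    intro i
    conv_lhs => rw [hsum_repr (KaehlerDifferential.D k (MvPolynomial (Fin n) k) (σ i))]
    exact Finset.sum_congr rfl fun l _ => by
      rw [KaehlerDifferential.mvPolynomialBasis_repr_apply]
  set Jm : Matrix (Fin n) (Fin n) (MvPolynomial (Fin n) k) :=
    Matrix.of fun i j => MvPolynomial.pderiv j (σ i) with hJmdef
  have hJmentry : ∀ i jx, Jm i jx = MvPolynomial.pderiv jx (σ i) := fun i jx => by
    rw [hJmdef]; rfl
  have hNdet : ∀ w : W, (N w).det = MvPolynomial.C (δ w) := by
    intro w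
    rw [hNdef]
    show ((M w).map (MvPolynomial.C : k →+* MvPolynomial (Fin n) k)).det = _
    rw [← RingHom.mapMatrix_apply, ← RingHom.map_det]
  have hJrel : ∀ w : W, (Jm.map (ρ w)) * N w = Jm := by
    intro w
    refine Matrix.ext fun i jx => ?_
    have h1 : θ w (KaehlerDifferential.D k (MvPolynomial (Fin n) k) (σ i))
        = KaehlerDifferential.D k (MvPolynomial (Fin n) k) (σ i) := by
      rw [hθD, hσinv]
    rw [hDσ i, hθsum] at h1
    have h2 := congrFun (hsum_inj _ _ h1) jx
    rw [Matrix.mul_apply]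
    calc ∑ l, Jm.map (⇑(ρ w)) i l * N w l jx
        = ∑ l, ρ w (MvPolynomial.pderiv l (σ i)) * MvPolynomial.C (M w l jx) := by
          refine Finset.sum_congr rfl fun l _ => ?_
          rw [Matrix.map_apply, hJmentry]
          try rfl
      _ = MvPolynomial.pderiv jx (σ i) := h2
      _ = Jm i jx := (hJmentry i jx).symm
  have hJtrans : ∀ w : W, Jm.det = MvPolynomial.C (δ w) * ρ w Jm.det := by
    intro w
    conv_lhs => rw [← hJrel w]
    rw [Matrix.det_mul, hNdet w]
    have h0 : (Jm.map (ρ w)).det = ρ w Jm.det := by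
      have h1 := RingHom.map_det ((ρ w).toAlgHom.toRingHom) Jm
      rw [RingHom.mapMatrix_apply] at h1
      exact h1.symm
    rw [h0, mul_comm]
  have hJne : Jm.det ≠ 0 := hJ
  intro ω
  constructor
  · -- forward direction
    intro hω
    set a : Fin n → MvPolynomial (Fin n) k :=
      fun l => (KaehlerDifferential.mvPolynomialBasis k (Fin n)).repr ω l with hadef
    have hInva : ∀ w : W, ∀ jx, ∑ l, ρ w (a l) * MvPolynomial.C (M w l jx) = a jx := by
      intro w
      have h1 := hω w
      conv_lhs at h1 => rw [hsum_repr ω]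
      rw [hθsum] at h1
      conv_rhs at h1 => rw [hsum_repr ω]
      exact fun jx => congrFun (hsum_inj _ _ h1) jx
    set p : Fin n → MvPolynomial (Fin n) k := (Jmᵀ.adjugate).mulVec a with hpdef
    have hptrans : ∀ (w : W) (i : Fin n), p i = MvPolynomial.C (δ w) * ρ w (p i) := by
      intro w
      have hInv' : (N w)ᵀ.mulVec (fun j => ρ w (a j)) = a := by
        funext jx
        rw [Matrix.mulVec_transpose]
        show ∑ l, ρ w (a l) * N w l jx = a jx
        calc ∑ l, ρ w (a l) * N w l jx
            = ∑ l, ρ w (a l) * MvPolynomial.C (M w l jx) := rfl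
          _ = a jx := hInva w jx
      have hadj : ((Jm.map (ρ w))ᵀ).adjugate = (Jmᵀ.adjugate).map (ρ w) := by
        rw [← Matrix.transpose_map]
        have h0 := RingHom.map_adjugate ((ρ w).toAlgHom.toRingHom) Jmᵀ
        rw [RingHom.mapMatrix_apply, RingHom.mapMatrix_apply] at h0
        exact h0.symm
      have h4 : Jmᵀ = (N w)ᵀ * ((Jm.map (ρ w))ᵀ) := by
        conv_lhs => rw [← hJrel w]
        rw [Matrix.transpose_mul]
      have h5 : Jmᵀ.adjugate = ((Jm.map (ρ w))ᵀ).adjugate * ((N w)ᵀ).adjugate := by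
        conv_lhs => rw [h4]
        rw [Matrix.adjugate_mul_distrib]
      have h6 : p = (MvPolynomial.C (δ w) : MvPolynomial (Fin n) k)
          • (fun i => ρ w (p i)) := by
        calc p = (Jmᵀ.adjugate).mulVec a := hpdef
          _ = (((Jm.map (ρ w))ᵀ).adjugate * ((N w)ᵀ).adjugate).mulVec
                ((N w)ᵀ.mulVec (fun j => ρ w (a j))) := by
              rw [← h5, hInv']
          _ = ((((Jm.map (ρ w))ᵀ).adjugate * ((N w)ᵀ).adjugate) * (N w)ᵀ).mulVec
                (fun j => ρ w (a j)) := by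
              rw [Matrix.mulVec_mulVec]
          _ = (((Jm.map (ρ w))ᵀ).adjugate
                * (MvPolynomial.C (δ w) • (1 : Matrix (Fin n) (Fin n) (MvPolynomial (Fin n) k)))).mulVec
                (fun j => ρ w (a j)) := by
              rw [mul_assoc, Matrix.adjugate_mul, Matrix.det_transpose, hNdet w]
          _ = (MvPolynomial.C (δ w) • ((Jm.map (ρ w))ᵀ).adjugate).mulVec
                (fun j => ρ w (a j)) := by
              rw [Matrix.mul_smul, mul_one]
          _ = MvPolynomial.C (δ w) • (((Jm.map (ρ w))ᵀ).adjugate).mulVec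
                (fun j => ρ w (a j)) := by
              rw [Matrix.smul_mulVec]
          _ = MvPolynomial.C (δ w) • (fun i => ρ w (p i)) := by
              congr 1
              funext i2
              rw [hadj]
              show ∑ j, ((Jmᵀ.adjugate).map (ρ w)) i2 j * ρ w (a j) = ρ w (p i2)
              have hp2 : p i2 = ∑ j, Jmᵀ.adjugate i2 j * a j := rfl
              rw [hp2, map_sum]
              exact Finset.sum_congr rfl fun j _ => by
                rw [Matrix.map_apply, ← _root_.map_mul]
      intro i
      have h7 := congrFun h6 i
      rw [Pi.smul_apply, smul_eq_mul] at h7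
      exact h7
    have key : ∀ i, ∃ q, (∀ w : W, ρ w q = q) ∧ p i = q * Jm.det := by
      intro i
      by_cases hp0 : p i = 0
      · exact ⟨0, fun w => map_zero _, by rw [hp0, zero_mul]⟩
      · have hCpow : ∀ (v : W) (m : ℕ),
            (MvPolynomial.C (δ v) : MvPolynomial (Fin n) k) ^ m = MvPolynomial.C (δ v ^ m) :=
          fun v m => (map_pow _ _ _).symm
        have juggle : ∀ (c x y : MvPolynomial (Fin n) k) (m : ℕ),
            (c * x) * (c * y) ^ m = c ^ (m + 1) * (x * y ^ m) := by
          intro c x y m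
          rw [mul_pow]
          ring
        have hδ2 : ∀ w : W, δ w * δ w = 1 := by
          intro w
          rcases lt_or_ge (Nat.card W) 3 with hN | hN
          · have hNpos : 0 < Nat.card W := Nat.card_pos
            have h12 : Nat.card W = 1 ∨ Nat.card W = 2 := by omega
            have hc := hδcard w
            rcases h12 with h1 | h1
            · rw [h1, pow_one] at hc
              rw [hc, mul_one]
            · rw [h1, pow_two] at hc
              exact hc
          · have hprem : ∀ v : W, ρ v (p i * Jm.det ^ (Nat.card W - 2))
                = δ v • (p i * Jm.det ^ (Nat.card W - 2)) := by
              intro v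
              rw [MvPolynomial.smul_eq_C_mul, _root_.map_mul, map_pow]
              have e1 : p i * Jm.det ^ (Nat.card W - 2)
                  = MvPolynomial.C (δ v) ^ (Nat.card W - 2 + 1)
                      * (ρ v (p i) * ρ v Jm.det ^ (Nat.card W - 2)) := by
                conv_lhs => rw [hptrans v i, hJtrans v]
                exact juggle _ _ _ _
              rw [e1, ← mul_assoc, ← pow_succ']
              have e2 : Nat.card W - 2 + 1 + 1 = Nat.card W := by omega
              rw [e2, hCpow, hδcard, MvPolynomial.C_1, one_mul]
            obtain ⟨q, hq1, hq2⟩ := hanti _ hprem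
            have h8 : p i * Jm.det ^ (Nat.card W - 3) = q := by
              have h9 : p i * Jm.det ^ (Nat.card W - 3) * Jm.det = q * Jm.det := by
                rw [mul_assoc, ← pow_succ]
                have e3 : Nat.card W - 3 + 1 = Nat.card W - 2 := by omega
                rw [e3]
                exact hq2
              exact mul_right_cancel₀ hJne h9
            have h10 : p i * Jm.det ^ (Nat.card W - 3)
                = MvPolynomial.C (δ w) ^ (Nat.card W - 3 + 1)
                    * (ρ w (p i) * ρ w Jm.det ^ (Nat.card W - 3)) := by
              conv_lhs => rw [hptrans w i, hJtrans w]
              exact juggle _ _ _ _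
            have h11 : ρ w (p i) * ρ w Jm.det ^ (Nat.card W - 3)
                = p i * Jm.det ^ (Nat.card W - 3) := by
              rw [← map_pow, ← _root_.map_mul, h8, hq1 w, ← h8]
            rw [h11] at h10
            have h12 : p i * Jm.det ^ (Nat.card W - 3) ≠ 0 :=
              mul_ne_zero hp0 (pow_ne_zero _ hJne)
            have h13 : (MvPolynomial.C (δ w) : MvPolynomial (Fin n) k)
                ^ (Nat.card W - 3 + 1) = 1 := by
              have h14 : MvPolynomial.C (δ w) ^ (Nat.card W - 3 + 1)
                  * (p i * Jm.det ^ (Nat.card W - 3))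
                  = 1 * (p i * Jm.det ^ (Nat.card W - 3)) := by
                rw [one_mul, ← h10]
              exact mul_right_cancel₀ h12 h14
            have h15 : δ w ^ (Nat.card W - 2) = 1 := by
              have e4 : Nat.card W - 3 + 1 = Nat.card W - 2 := by omega
              rw [e4, hCpow] at h13
              have h16 := MvPolynomial.C_injective (Fin n) k (h13.trans MvPolynomial.C_1.symm)
              exact h16
            have h17 : δ w ^ (Nat.card W - 2) * δ w ^ 2 = 1 := by
              rw [← pow_add]
              have e5 : Nat.card W - 2 + 2 = Nat.card W := by omega
              rw [e5]
              exact hδcard w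
            rw [h15, one_mul, pow_two] at h17
            exact h17
        have hprem2 : ∀ v : W, ρ v (p i) = δ v • p i := by
          intro v
          rw [MvPolynomial.smul_eq_C_mul]
          calc ρ v (p i)
              = (MvPolynomial.C (δ v) * MvPolynomial.C (δ v)) * ρ v (p i) := by
                rw [← MvPolynomial.C_mul, hδ2 v, MvPolynomial.C_1, one_mul]
            _ = MvPolynomial.C (δ v) * (MvPolynomial.C (δ v) * ρ v (p i)) := by ring
            _ = MvPolynomial.C (δ v) * p i := by rw [← hptrans v i]
        exact hanti _ hprem2
    choose q hq1 hq2 using key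
    refine ⟨q, hq1, ?_⟩
    have hJa : ∀ jx, a jx = ∑ i, Jm i jx * q i := by
      intro jx
      have h10 : Jmᵀ.mulVec p = Jm.det • a := by
        rw [hpdef, Matrix.mulVec_mulVec, Matrix.mul_adjugate, Matrix.det_transpose,
          Matrix.smul_mulVec, Matrix.one_mulVec]
      have h11 := congrFun h10 jx
      rw [Pi.smul_apply, smul_eq_mul] at h11
      have h9 : ∑ i, Jm i jx * p i = Jm.det * a jx := by
        rw [← h11]
        show ∑ i, Jm i jx * p i = ∑ i, Jmᵀ jx i * p i
        exact Finset.sum_congr rfl fun i _ => by rw [Matrix.transpose_apply]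
      have h12 : ∑ i, Jm i jx * p i = Jm.det * ∑ i, Jm i jx * q i := by
        rw [Finset.mul_sum]
        refine Finset.sum_congr rfl fun i _ => ?_
        rw [hq2 i]
        ring
      rw [h12] at h9
      exact (mul_left_cancel₀ hJne h9).symm
    have hfin : ∑ i, q i • KaehlerDifferential.D k (MvPolynomial (Fin n) k) (σ i)
        = ∑ jx, a jx • KaehlerDifferential.D k (MvPolynomial (Fin n) k) (MvPolynomial.X jx) := by
      calc ∑ i, q i • KaehlerDifferential.D k (MvPolynomial (Fin n) k) (σ i)
          = ∑ i, ∑ jx, (q i * Jm i jx)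
              • KaehlerDifferential.D k (MvPolynomial (Fin n) k) (MvPolynomial.X jx) := by
            refine Finset.sum_congr rfl fun i _ => ?_
            rw [hDσ i, Finset.smul_sum]
            exact Finset.sum_congr rfl fun jx _ => by rw [smul_smul, hJmentry]
        _ = ∑ jx, ∑ i, (q i * Jm i jx)
              • KaehlerDifferential.D k (MvPolynomial (Fin n) k) (MvPolynomial.X jx) :=
            Finset.sum_comm
        _ = ∑ jx, a jx • KaehlerDifferential.D k (MvPolynomial (Fin n) k) (MvPolynomial.X jx) := by
            refine Finset.sum_congr rfl fun jx _ => ?_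
            rw [← Finset.sum_smul, hJa jx]
            congr 1
            exact Finset.sum_congr rfl fun i _ => mul_comm _ _
    rw [hfin]
    exact hsum_repr ω
  · rintro ⟨c, hcinv, rfl⟩ w
    rw [map_sum]
    refine Finset.sum_congr rfl fun i _ => ?_
    rw [hθs, hθD, hcinv i w, hσinv w i]
end

section
/- With the setup described in the context, the k⟦X⟧-submodule S of V ⊗_k k⟦X⟧ generated by the σ-fixed elements equals the direct sum over 0 ≤ i < m of X^{(m−i) mod m}·(V_i ⊗_k k⟦X⟧), and the quotient (V ⊗_k k⟦X⟧)/S is a finite-dimensional k-vector space of dimension Σ_{i=1}^{m−1} (m−i)·dim_k V_i. -/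
open TensorProduct

open PowerSeries

noncomputable def rescaleL {k : Type*} [CommRing k] (a : k) : PowerSeries k →ₗ[k] PowerSeries k where
  toFun := rescale a
  map_add' := map_add _
  map_smul' c f := by
    ext n
    simp [coeff_rescale, mul_left_comm]

@[simp] lemma rescaleL_apply {k : Type*} [CommRing k] (a : k) (f : PowerSeries k) :
    rescaleL a f = rescale a f := rfl

lemma root_sum_zero {k : Type*} [Field k] {m : ℕ} {ξ : k} (hξm : ξ ^ m = 1) (hξ : ξ ≠ 1) :
    ∑ i ∈ Finset.range m, ξ ^ i = 0 := by
  rw [geom_sum_eq hξ, hξm, sub_self, zero_div]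

section eigen
variable {k V : Type*} [Field k] [AddCommGroup V] [Module k V] {m : ℕ} {ζ : k}

lemma cycle_eigvec (hm : 1 ≤ m) {a : k} (ha : a ≠ 0) (ham : a ^ m = 1)
    (G : Module.End k V) (hG : G ^ m = 1) (v : V) :
    G (∑ t ∈ Finset.range m, a ^ t • (G ^ t) v)
      = a⁻¹ • ∑ t ∈ Finset.range m, a ^ t • (G ^ t) v := by
  obtain ⟨m', rfl⟩ : ∃ m', m = m' + 1 := ⟨m - 1, by omega⟩
  have key : a • G (∑ t ∈ Finset.range (m' + 1), a ^ t • (G ^ t) v)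
      = ∑ t ∈ Finset.range (m' + 1), a ^ t • (G ^ t) v := by
    rw [map_sum, Finset.smul_sum]
    have h1 : ∀ t, a • G (a ^ t • (G ^ t) v) = a ^ (t + 1) • (G ^ (t + 1)) v := by
      intro t
      rw [map_smul, smul_smul, ← pow_succ', pow_succ' G t, Module.End.mul_apply]
    simp_rw [h1]
    rw [Finset.sum_range_succ, Finset.sum_range_succ']
    congr 1 <;> simp [ham, hG, Module.End.one_apply]
  calc G (∑ t ∈ Finset.range (m' + 1), a ^ t • (G ^ t) v)
      = a⁻¹ • (a • G (∑ t ∈ Finset.range (m' + 1), a ^ t • (G ^ t) v)) := by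
        rw [smul_smul, inv_mul_cancel₀ ha, one_smul]
    _ = a⁻¹ • ∑ t ∈ Finset.range (m' + 1), a ^ t • (G ^ t) v := by rw [key]

lemma eigen_sup_eq_top (hm : 1 ≤ m) (hζ : IsPrimitiveRoot ζ m)
    (G : Module.End k V) (hG : G ^ m = 1) :
    ⨆ i : Fin m, LinearMap.ker (G - ζ ^ (i : ℕ) • LinearMap.id) = ⊤ := by
  have hζm : ζ ^ m = 1 := hζ.pow_eq_one
  have hζ0 : ζ ≠ 0 := by
    intro h; rw [h, zero_pow (by omega)] at hζm; exact one_ne_zero hζm.symm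
  have hmk : ((m : ℕ) : k) ≠ 0 := by
    have : NeZero m := ⟨by omega⟩
    exact (hζ.neZero').out
  rw [eq_top_iff]
  intro v _
  have hmem : ∀ i : Fin m,
      (∑ t ∈ Finset.range m, ((ζ ^ (i : ℕ))⁻¹) ^ t • (G ^ t) v)
        ∈ LinearMap.ker (G - ζ ^ (i : ℕ) • LinearMap.id) := by
    intro i
    have hζi0 : ζ ^ (i : ℕ) ≠ 0 := pow_ne_zero _ hζ0
    have ham : ((ζ ^ (i : ℕ))⁻¹) ^ m = 1 := by
      rw [inv_pow, ← pow_mul, mul_comm, pow_mul, hζm, one_pow, inv_one]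
    have := cycle_eigvec hm (inv_ne_zero hζi0) ham G hG v
    rw [LinearMap.mem_ker, LinearMap.sub_apply, LinearMap.smul_apply, LinearMap.id_apply,
      sub_eq_zero, this, inv_inv]
  have htot : ∑ i : Fin m, (∑ t ∈ Finset.range m, ((ζ ^ (i : ℕ))⁻¹) ^ t • (G ^ t) v)
      = (m : k) • v := by
    rw [Finset.sum_comm]
    have hcoef : ∀ t ∈ Finset.range m,
        ∑ i : Fin m, ((ζ ^ (i : ℕ))⁻¹) ^ t • (G ^ t) v
          = (if t = 0 then (m : k) else 0) • (G ^ t) v := by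
      intro t ht
      rw [← Finset.sum_smul]
      congr 1
      have hpow : ∀ i : Fin m, ((ζ ^ (i : ℕ))⁻¹) ^ t = ((ζ⁻¹) ^ t) ^ (i : ℕ) := by
        intro i
        rw [← inv_pow, ← pow_mul, ← pow_mul, mul_comm]
      simp_rw [hpow]
      rw [Fin.sum_univ_eq_sum_range (fun n => ((ζ⁻¹) ^ t) ^ n)]
      split_ifs with h
      · subst h; simp
      · refine root_sum_zero ?_ ?_
        · rw [← pow_mul, mul_comm, pow_mul, inv_pow, hζm, inv_one, one_pow]
        · exact hζ.inv.pow_ne_one_of_pos_of_lt (by omega) (Finset.mem_range.mp ht)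
    rw [Finset.sum_congr rfl hcoef]
    simp only [ite_smul, zero_smul]
    rw [Finset.sum_ite_eq' (Finset.range m) 0 (fun t => ((m : k)) • (G ^ t) v)]
    have h0 : 0 ∈ Finset.range m := Finset.mem_range.mpr (by omega)
    simp [h0]
  have : v = ((m : k))⁻¹ • ∑ i : Fin m,
      (∑ t ∈ Finset.range m, ((ζ ^ (i : ℕ))⁻¹) ^ t • (G ^ t) v) := by
    rw [htot, smul_smul, inv_mul_cancel₀ hmk, one_smul]
  rw [this]
  exact Submodule.smul_mem _ _ (Submodule.sum_mem _ fun i _ =>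
    Submodule.mem_iSup_of_mem i (hmem i))

end eigen

section eigen2
variable {k V : Type*} [Field k] [AddCommGroup V] [Module k V] {m : ℕ} {ζ : k}

lemma eigen_ker_eq (G : Module.End k V) (μ : k) :
    LinearMap.ker (G - μ • LinearMap.id) = G.eigenspace μ := by
  ext x
  rw [Module.End.mem_eigenspace_iff, LinearMap.mem_ker, LinearMap.sub_apply,
    LinearMap.smul_apply, LinearMap.id_apply, sub_eq_zero]

lemma eigen_indep (hζ : IsPrimitiveRoot ζ m) (G : Module.End k V) :
    iSupIndep (fun i : Fin m => LinearMap.ker (G - ζ ^ (i : ℕ) • LinearMap.id)) := by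
  have h : (fun i : Fin m => LinearMap.ker (G - ζ ^ (i : ℕ) • LinearMap.id))
      = G.eigenspace ∘ (fun i : Fin m => ζ ^ (i : ℕ)) := by
    funext i; exact eigen_ker_eq G _
  rw [h]
  exact (Module.End.eigenspaces_iSupIndep G).comp fun i j hij =>
    Fin.ext (hζ.pow_inj i.2 j.2 hij)

end eigen2

set_option maxHeartbeats 3200000 in
set_option synthInstance.maxHeartbeats 1000000 in

/-- Let `k` be a field, `ζ ∈ k` a primitive `m`-th root of unity
(`m ≥ 1`), `V` a finite-dimensional `k`-vector space and `g` an automorphism of `V` with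
`g^m = 1`, so that `V = ⊕ V_i` with `V_i = ker(g − ζ^i)`.  Let `σ` be the automorphism of
`k⟦X⟧ ⊗ V` with `σ(f ⊗ v) = f(ζX) ⊗ g(v)` and let `S` be the `k⟦X⟧`-submodule generated
by the `σ`-fixed elements.  Then `S` is the direct sum, over `0 ≤ i < m`, of
`X^((m−i) mod m)·(k⟦X⟧ ⊗ V_i)`, and the quotient `(k⟦X⟧ ⊗ V)/S` is a finite-dimensional
`k`-vector space of dimension `Σ_{i=1}^{m−1} (m−i)·dim V_i`. -/
theorem span_of_fixed_elements_and_quotient_dim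
    {k V : Type*} [Field k] [AddCommGroup V] [Module k V] [FiniteDimensional k V]
    {m : ℕ} (hm : 1 ≤ m) {ζ : k} (hζ : IsPrimitiveRoot ζ m)
    (g : V ≃ₗ[k] V) (hg : g ^ m = 1)
    (σ : PowerSeries k ⊗[k] V →ₗ[k] PowerSeries k ⊗[k] V)
    (hσ : ∀ (f : PowerSeries k) (v : V),
      σ (f ⊗ₜ[k] v) = PowerSeries.rescale ζ f ⊗ₜ[k] g v) :
    Submodule.span (PowerSeries k) {x : PowerSeries k ⊗[k] V | σ x = x} =
      (⨆ i : Fin m, Submodule.span (PowerSeries k)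
        {x : PowerSeries k ⊗[k] V | ∃ v : V, g v = ζ ^ (i : ℕ) • v ∧
          x = ((PowerSeries.X : PowerSeries k) ^ ((m - (i : ℕ)) % m)) ⊗ₜ[k] v}) ∧
    iSupIndep (fun i : Fin m => Submodule.span (PowerSeries k)
        {x : PowerSeries k ⊗[k] V | ∃ v : V, g v = ζ ^ (i : ℕ) • v ∧
          x = ((PowerSeries.X : PowerSeries k) ^ ((m - (i : ℕ)) % m)) ⊗ₜ[k] v}) ∧
    FiniteDimensional k
      ((PowerSeries k ⊗[k] V) ⧸
        (Submodule.span (PowerSeries k)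
          {x : PowerSeries k ⊗[k] V | σ x = x}).restrictScalars k) ∧
    Module.finrank k
        ((PowerSeries k ⊗[k] V) ⧸
          (Submodule.span (PowerSeries k)
            {x : PowerSeries k ⊗[k] V | σ x = x}).restrictScalars k) =
      ∑ i ∈ Finset.Ico 1 m, (m - i) *
        Module.finrank k (LinearMap.ker ((g : V →ₗ[k] V) - ζ ^ i • LinearMap.id)) := by
  classical
  have hζm : ζ ^ m = 1 := hζ.pow_eq_one
  set G : Module.End k V := (g : V →ₗ[k] V) with hGdef
  have hG : G ^ m = 1 := by
    ext v
    rw [Module.End.pow_apply, Module.End.one_apply]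
    show (⇑g)^[m] v = v
    rw [← LinearEquiv.pow_apply, hg]
    rfl
  -- eigenspace decomposition of V
  set Vi : Fin m → Submodule k V :=
    (fun i : Fin m => LinearMap.ker (G - ζ ^ (i : ℕ) • LinearMap.id)) with hVi
  have hindep : iSupIndep Vi := eigen_indep hζ G
  have hsup : ⨆ i, Vi i = ⊤ := eigen_sup_eq_top hm hζ G hG
  have hInt : DirectSum.IsInternal Vi :=
    (DirectSum.isInternal_submodule_iff_iSupIndep_and_iSup_eq_top Vi).mpr ⟨hindep, hsup⟩
  set c : Fin m → ℕ := fun i => Module.finrank k (Vi i) with hc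
  set bV : Module.Basis (Σ i : Fin m, Fin (c i)) k V :=
    hInt.collectedBasis (fun i => Module.finBasis k (Vi i)) with hbV
  have hbmem : ∀ r, bV r ∈ Vi r.1 := fun r => hInt.collectedBasis_mem _ r
  have hbe : ∀ r, G (bV r) = ζ ^ ((r.1 : Fin m) : ℕ) • bV r := by
    intro r
    have := hbmem r
    rw [hVi, LinearMap.mem_ker, LinearMap.sub_apply, LinearMap.smul_apply,
      LinearMap.id_apply, sub_eq_zero] at this
    exact this
  have hdiag : ∀ (v : V) (r), bV.repr (G v) r = ζ ^ ((r.1 : Fin m) : ℕ) * bV.repr v r := by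
    intro v r
    have hmaps : (Finsupp.lapply r ∘ₗ (bV.repr.toLinearMap : V →ₗ[k] ((Σ i : Fin m, Fin (c i)) →₀ k)) ∘ₗ G)
        = ζ ^ ((r.1 : Fin m) : ℕ) • (Finsupp.lapply r ∘ₗ (bV.repr.toLinearMap : V →ₗ[k] ((Σ i : Fin m, Fin (c i)) →₀ k))) := by
      refine bV.ext fun s => ?_
      simp only [LinearMap.comp_apply, LinearMap.smul_apply, LinearEquiv.coe_coe,
        Finsupp.lapply_apply, hbe s, map_smul, Module.Basis.repr_self, Finsupp.smul_apply,
        smul_eq_mul]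
      by_cases hsr : s = r
      · subst hsr; simp
      · rw [Finsupp.single_eq_of_ne (Ne.symm hsr)]; ring
    have := LinearMap.congr_fun hmaps v
    simpa using this
  set B : Module.Basis (Σ i : Fin m, Fin (c i)) (PowerSeries k) (PowerSeries k ⊗[k] V) :=
    bV.baseChange (PowerSeries k) with hB
  set j : Fin m → ℕ := fun i => (m - (i : ℕ)) % m with hj
  -- coordinates of σ
  have hrepr : ∀ (x : PowerSeries k ⊗[k] V) (r), B.repr (σ x) r
      = PowerSeries.C (ζ ^ ((r.1 : Fin m) : ℕ)) * rescale ζ (B.repr x r) := by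
    have hcomp : ∀ r, ((B.coord r).restrictScalars k) ∘ₗ σ
        = (LinearMap.mulLeft k (PowerSeries.C (ζ ^ ((r.1 : Fin m) : ℕ)))) ∘ₗ
            (rescaleL ζ) ∘ₗ ((B.coord r).restrictScalars k) := by
      intro r
      refine TensorProduct.ext' fun f v => ?_
      simp only [LinearMap.comp_apply, LinearMap.coe_restrictScalars, Module.Basis.coord_apply,
        hσ, rescaleL_apply, LinearMap.mulLeft_apply]
      rw [hB, Module.Basis.baseChange_repr_tmul, Module.Basis.baseChange_repr_tmul]
      have hgv : bV.repr (g v) r = ζ ^ ((r.1 : Fin m) : ℕ) * bV.repr v r := hdiag v r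
      rw [hgv, smul_eq_C_mul, smul_eq_C_mul, map_mul, map_mul]
      have hCr : rescale ζ (PowerSeries.C (bV.repr v r)) = PowerSeries.C (bV.repr v r) := by
        ext n
        simp only [coeff_rescale, PowerSeries.coeff_C]
        split_ifs with h
        · subst h; simp
        · ring
      rw [hCr]
      ring
    intro x r
    have := LinearMap.congr_fun (hcomp r) x
    simpa [Module.Basis.coord_apply] using this
  -- the span of fixed elements is contained in K
  set K : Submodule (PowerSeries k) (PowerSeries k ⊗[k] V) :=
    ⨅ r, Submodule.comap (B.coord r)
      (Ideal.span {(X : PowerSeries k) ^ (j r.1)}) with hK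
  have hKmem : ∀ x, x ∈ K ↔ ∀ r, (X : PowerSeries k) ^ (j r.1) ∣ B.repr x r := by
    intro x
    simp [hK, Submodule.mem_iInf, Ideal.mem_span_singleton, Module.Basis.coord_apply]
  have hfix : ∀ x : PowerSeries k ⊗[k] V, σ x = x → x ∈ K := by
    intro x hx
    rw [hKmem]
    intro r
    rw [X_pow_dvd_iff]
    intro n hn
    have hxr : B.repr x r = PowerSeries.C (ζ ^ ((r.1 : Fin m) : ℕ)) *
        rescale ζ (B.repr x r) := by
      conv_lhs => rw [← hx]
      exact hrepr x r
    have hco := congrArg (PowerSeries.coeff n) hxr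
    rw [coeff_C_mul, coeff_rescale, ← mul_assoc, ← pow_add] at hco
    have him : ((r.1 : Fin m) : ℕ) < m := (r.1 : Fin m).2
    have hjval : j r.1 = (m - ((r.1 : Fin m) : ℕ)) % m := rfl
    rcases Nat.eq_zero_or_pos ((r.1 : Fin m) : ℕ) with h0 | h0
    · rw [hjval, h0, Nat.sub_zero, Nat.mod_self] at hn
      omega
    · rw [hjval, Nat.mod_eq_of_lt (by omega)] at hn
      have hne : ζ ^ (((r.1 : Fin m) : ℕ) + n) ≠ 1 :=
        hζ.pow_ne_one_of_pos_of_lt (by omega) (by omega)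
      by_contra hc
      exact hne (mul_right_cancel₀ hc (by rw [one_mul]; exact hco.symm))
  set T : Fin m → Submodule (PowerSeries k) (PowerSeries k ⊗[k] V) :=
    (fun i : Fin m => Submodule.span (PowerSeries k)
        {x : PowerSeries k ⊗[k] V | ∃ v : V, g v = ζ ^ (i : ℕ) • v ∧
          x = ((PowerSeries.X : PowerSeries k) ^ ((m - (i : ℕ)) % m)) ⊗ₜ[k] v}) with hT
  set S : Submodule (PowerSeries k) (PowerSeries k ⊗[k] V) :=
    Submodule.span (PowerSeries k) {x : PowerSeries k ⊗[k] V | σ x = x} with hS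
  have hSK : S ≤ K := Submodule.span_le.mpr fun x hx => hfix x hx
  have hKT : K ≤ ⨆ i, T i := by
    intro x hx
    rw [hKmem] at hx
    have hxsum : x = ∑ r, B.repr x r • B r := (B.sum_repr x).symm
    rw [hxsum]
    refine Submodule.sum_mem _ fun r _ => ?_
    obtain ⟨q, hq⟩ := hx r
    have hBr : B r = (1 : PowerSeries k) ⊗ₜ[k] bV r := by
      rw [hB, Module.Basis.baseChange_apply]
    have hgen : ((X : PowerSeries k) ^ ((m - ((r.1 : Fin m) : ℕ)) % m)) ⊗ₜ[k] (bV r)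
        ∈ {x : PowerSeries k ⊗[k] V | ∃ v : V, g v = ζ ^ ((r.1 : Fin m) : ℕ) • v ∧
          x = ((PowerSeries.X : PowerSeries k) ^ ((m - ((r.1 : Fin m) : ℕ)) % m)) ⊗ₜ[k] v} :=
      ⟨bV r, hbe r, rfl⟩
    have hterm : B.repr x r • B r = q • (((X : PowerSeries k) ^ (j r.1)) ⊗ₜ[k] bV r) := by
      rw [hq, mul_comm, mul_smul, hBr, TensorProduct.smul_tmul', smul_eq_mul, mul_one]
    rw [hterm]
    exact Submodule.mem_iSup_of_mem r.1
      (Submodule.smul_mem _ q (Submodule.subset_span hgen))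
  have hTS : ∀ i, T i ≤ S := by
    intro i
    refine Submodule.span_le.mpr ?_
    rintro x ⟨v, hv, rfl⟩
    refine Submodule.subset_span ?_
    show σ _ = _
    rw [hσ, hv]
    have hres : rescale ζ ((X : PowerSeries k) ^ ((m - (i : ℕ)) % m))
        = (ζ ^ ((m - (i : ℕ)) % m)) • (X : PowerSeries k) ^ ((m - (i : ℕ)) % m) := by
      rw [map_pow, rescale_X, mul_pow, ← map_pow, ← smul_eq_C_mul]
    have hone : ζ ^ ((m - (i : ℕ)) % m) * ζ ^ (i : ℕ) = 1 := by
      rw [← pow_add, hζ.pow_eq_one_iff_dvd]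
      rcases Nat.eq_zero_or_pos (i : ℕ) with h0 | h0
      · simp [h0, Nat.mod_self]
      · rw [Nat.mod_eq_of_lt (by omega)]
        have hmi : m - (i : ℕ) + (i : ℕ) = m := by have := i.2; omega
        rw [hmi]
    rw [hres, ← TensorProduct.smul_tmul', TensorProduct.tmul_smul, smul_smul, hone, one_smul]
  have hST : S = ⨆ i, T i := le_antisymm (le_trans hSK hKT) (iSup_le hTS)
  have hTcoord : ∀ (i : Fin m) x, x ∈ T i → ∀ r, r.1 ≠ i → B.repr x r = 0 := by
    intro i x hx r hri
    induction hx using Submodule.span_induction with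
    | mem x hx =>
      obtain ⟨v, hv, rfl⟩ := hx
      rw [hB, Module.Basis.baseChange_repr_tmul]
      have hv0 : bV.repr v r = 0 := by
        have h1 := hdiag v r
        have h2 : bV.repr (G v) r = ζ ^ (i : ℕ) * bV.repr v r := by
          show bV.repr (g v) r = _
          rw [hv, map_smul, Finsupp.smul_apply, smul_eq_mul]
        have hne : ζ ^ ((r.1 : Fin m) : ℕ) ≠ ζ ^ (i : ℕ) := by
          intro hcon
          exact hri (Fin.ext (hζ.pow_inj (r.1 : Fin m).2 i.2 hcon))
        have h3 : (ζ ^ ((r.1 : Fin m) : ℕ) - ζ ^ (i : ℕ)) * bV.repr v r = 0 := by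
          rw [sub_mul, ← h1, h2, sub_self]
        rcases mul_eq_zero.mp h3 with h | h
        · exact absurd (sub_eq_zero.mp h) hne
        · exact h
      rw [hv0, zero_smul]
    | zero => simp
    | add x y hx hy ihx ihy => rw [map_add, Finsupp.add_apply, ihx, ihy, add_zero]
    | smul a x hx ih => rw [map_smul, Finsupp.smul_apply, ih, smul_zero]
  have hTind : iSupIndep T := by
    rw [iSupIndep_def]
    intro i
    set F : Submodule (PowerSeries k) (PowerSeries k ⊗[k] V) :=
      ⨅ (r : (i : Fin m) × Fin (c i)) (_ : r.1 = i), LinearMap.ker (B.coord r) with hF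
    have hsup2 : (⨆ j, ⨆ (_ : j ≠ i), T j) ≤ F := by
      refine iSup_le fun jj => iSup_le fun hj => ?_
      intro x hx
      rw [hF]
      simp only [Submodule.mem_iInf]
      intro r hr
      rw [LinearMap.mem_ker, Module.Basis.coord_apply]
      exact hTcoord jj x hx r (by rw [hr]; exact Ne.symm hj)
    refine Disjoint.mono_right hsup2 ?_
    rw [Submodule.disjoint_def]
    intro x hxT hxF
    rw [hF] at hxF
    simp only [Submodule.mem_iInf] at hxF
    have hrepr0 : B.repr x = 0 := by
      refine Finsupp.ext fun r => ?_
      by_cases hri : r.1 = i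
      · have := hxF r hri
        rw [LinearMap.mem_ker, Module.Basis.coord_apply] at this
        simpa using this
      · simpa using hTcoord i x hxT r hri
    have := B.repr.map_eq_zero_iff.mp hrepr0
    simpa using this
  have hKS : K ≤ S := le_trans hKT (iSup_le hTS)
  have hSeqK : S = K := le_antisymm hSK hKS
  set Ψ : PowerSeries k ⊗[k] V →ₗ[k] ((r : (i : Fin m) × Fin (c i)) → Fin (j r.1) → k) :=
    LinearMap.pi (fun r => LinearMap.pi (fun n =>
      (PowerSeries.coeff (n : ℕ)) ∘ₗ ((B.coord r).restrictScalars k))) with hΨ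
  have hΨapp : ∀ x r (n : Fin (j r.1)), Ψ x r n = PowerSeries.coeff (n : ℕ) (B.repr x r) := by
    intro x r n
    rw [hΨ]
    simp [LinearMap.pi_apply, Module.Basis.coord_apply]
  have hker : LinearMap.ker Ψ = S.restrictScalars k := by
    ext x
    rw [LinearMap.mem_ker, Submodule.restrictScalars_mem, hSeqK, hKmem]
    constructor
    · intro h r
      rw [X_pow_dvd_iff]
      intro d hd
      have := congrFun (congrFun h r) ⟨d, hd⟩
      rw [hΨapp] at this
      simpa using this
    · intro h
      funext r n
      rw [hΨapp]
      simpa using (X_pow_dvd_iff.mp (h r)) (n : ℕ) n.2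
  have hsurj : Function.Surjective Ψ := by
    intro q
    refine ⟨∑ r, ∑ n : Fin (j r.1), q r n • (((X : PowerSeries k) ^ (n : ℕ)) ⊗ₜ[k] bV r), ?_⟩
    funext r n
    simp only [map_sum, map_smul, Finset.sum_apply, Pi.smul_apply]
    have hcomp : ∀ (r' : (i : Fin m) × Fin (c i)) (n' : Fin (j r'.1)),
        Ψ (((X : PowerSeries k) ^ (n' : ℕ)) ⊗ₜ[k] bV r') r n
          = if r' = r then (if (n : ℕ) = (n' : ℕ) then (1:k) else 0) else 0 := by
      intro r' n'
      rw [hΨapp, hB, Module.Basis.baseChange_repr_tmul, Module.Basis.repr_self]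
      by_cases h : r' = r
      · subst h
        rw [Finsupp.single_eq_same, if_pos rfl, one_smul, coeff_X_pow]
      · rw [Finsupp.single_eq_of_ne (Ne.symm h), if_neg h, zero_smul, map_zero]
    simp only [hcomp]
    rw [Finset.sum_eq_single r]
    · have hterm : ∀ n' : Fin (j r.1),
          q r n' • (if (r : (i : Fin m) × Fin (c i)) = r then (if (n : ℕ) = (n' : ℕ) then (1:k) else 0) else 0)
            = if n = n' then q r n' else 0 := by
        intro n'
        rw [if_pos rfl]
        by_cases h : n = n'
        · rw [if_pos h, if_pos (by rw [h]), smul_eq_mul, mul_one]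
        · rw [if_neg h, if_neg (fun hv => h (Fin.ext hv)), smul_eq_mul, mul_zero]
      simp only [hterm]
      simp [Fin.val_eq_val]
    · intro r' _ hne
      simp only [if_neg hne, smul_zero, Finset.sum_const_zero]
    · intro h
      exact absurd (Finset.mem_univ r) h
  have e : ((PowerSeries k ⊗[k] V) ⧸ S.restrictScalars k)
      ≃ₗ[k] ((r : (i : Fin m) × Fin (c i)) → Fin (j r.1) → k) :=
    (Submodule.quotEquivOfEq _ _ hker.symm) ≪≫ₗ (Ψ.quotKerEquivOfSurjective hsurj)
  refine ⟨hST, hTind, Module.Finite.equiv e.symm, ?_⟩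
  rw [e.finrank_eq, Module.finrank_pi_fintype]
  have h1 : ∀ r : (i : Fin m) × Fin (c i),
      Module.finrank k (Fin (j r.1) → k) = j r.1 := fun r => Module.finrank_fin_fun k
  rw [Finset.sum_congr rfl (fun r _ => h1 r)]
  rw [← Finset.univ_sigma_univ, Finset.sum_sigma]
  simp only [Finset.sum_const, Finset.card_univ, Fintype.card_fin, smul_eq_mul]
  have h2 : (∑ i : Fin m, c i * j i)
      = ∑ n ∈ Finset.range m, (Module.finrank k
          (LinearMap.ker (G - ζ ^ n • LinearMap.id)) * ((m - n) % m)) :=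
    Fin.sum_univ_eq_sum_range
      (fun n => Module.finrank k (LinearMap.ker (G - ζ ^ n • LinearMap.id)) * ((m - n) % m)) m
  rw [h2, Finset.range_eq_Ico, Finset.sum_eq_sum_Ico_succ_bot (by omega)]
  rw [Nat.sub_zero, Nat.mod_self, mul_zero, zero_add]
  refine Finset.sum_congr rfl fun n hn => ?_
  rw [Finset.mem_Ico] at hn
  rw [Nat.mod_eq_of_lt (by omega), mul_comm]
end

section
/- With the setup described in the context, assume in addition that V carries a nondegenerate k-bilinear form B satisfying B(g x, g y) = B(x, y) for all x, y ∈ V. Then 2·dim_k((V ⊗_k k⟦X⟧)/S) = m·(dim_k V − dim_k V^g), where V^g = ker(g − id) is the fixed space of g. -/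
open TensorProduct Finset PowerSeries

open TensorProduct Finset PowerSeries

section
variable {k V : Type*} [Field k] [AddCommGroup V] [Module k V]

lemma aux_exists_eigenbasis [FiniteDimensional k V] {m : ℕ} (hm : 1 ≤ m) {ζ : k}
    (hζ : IsPrimitiveRoot ζ m) (g : V ≃ₗ[k] V) (hg : g ^ m = 1) :
    ∃ (s : Set V) (_ : Fintype s) (b : Module.Basis s k V) (ind : s → ℕ),
      (∀ j, ind j < m) ∧ (∀ j, g (b j) = ζ ^ (ind j) • (b j : V)) := by
  have hm0 : m ≠ 0 := by omega
  have : NeZero m := ⟨hm0⟩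
  have hmk : (m : k) ≠ 0 := (hζ.neZero').out
  have hζ0 : ζ ≠ 0 := hζ.ne_zero hm0
  have hgm : ∀ v : V, (g ^ m) v = v := fun v => by rw [hg]; rfl
  have hgsucc : ∀ (t : ℕ) (v : V), g ((g ^ t) v) = (g ^ (t + 1)) v := by
    intro t v
    rw [LinearEquiv.pow_apply, LinearEquiv.pow_apply, Function.iterate_succ_apply']
  set E : Set V := {v | ∃ i, i < m ∧ g v = ζ ^ i • v} with hE
  have hspan : ⊤ ≤ Submodule.span k E := by
    intro v _
    set u : ℕ → V := fun i => (m : k)⁻¹ • ∑ t ∈ range m, ((ζ⁻¹ ^ i) ^ t) • (g ^ t) v with hu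
    have hmem : ∀ i < m, u i ∈ E := by
      intro i him
      refine ⟨i, him, ?_⟩
      set a : k := ζ⁻¹ ^ i with ha
      have haζ : ζ ^ i * a = 1 := by
        rw [ha, ← mul_pow, mul_inv_cancel₀ hζ0, one_pow]
      have ham : a ^ m = 1 := by
        rw [ha, ← pow_mul, mul_comm i m, pow_mul, inv_pow, hζ.pow_eq_one, inv_one, one_pow]
      set F : ℕ → V := fun t => (ζ ^ i * a ^ t) • (g ^ t) v with hF
      have hFm : F m = F 0 := by
        simp only [hF, ham, pow_zero, mul_one, hgm v]
        rfl
      have key : g (∑ t ∈ range m, (a ^ t) • (g ^ t) v)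
          = (ζ ^ i) • ∑ t ∈ range m, (a ^ t) • (g ^ t) v := by
        calc g (∑ t ∈ range m, (a ^ t) • (g ^ t) v)
            = ∑ t ∈ range m, F (t + 1) := by
              rw [map_sum]
              refine Finset.sum_congr rfl fun t _ => ?_
              rw [map_smul, hgsucc, hF]
              have hsc : ζ ^ i * a ^ (t + 1) = a ^ t := by
                rw [pow_succ, mul_comm (a ^ t) a, ← mul_assoc, haζ, one_mul]
              simp only [hsc]
          _ = ∑ t ∈ range m, F t := by
              have h1 : ∑ t ∈ range (m + 1), F t = (∑ t ∈ range m, F (t + 1)) + F 0 :=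
                Finset.sum_range_succ' F m
              have h2 : ∑ t ∈ range (m + 1), F t = (∑ t ∈ range m, F t) + F m :=
                Finset.sum_range_succ F m
              rw [hFm] at h2
              exact add_right_cancel (h1.symm.trans h2)
          _ = (ζ ^ i) • ∑ t ∈ range m, (a ^ t) • (g ^ t) v := by
              rw [Finset.smul_sum]
              refine Finset.sum_congr rfl fun t _ => ?_
              rw [hF, smul_smul]
      rw [hu]
      simp only [map_smul]
      rw [key, smul_comm]
    have hsum : ∑ i ∈ range m, u i = v := by
      rw [hu]
      simp only
      rw [← Finset.smul_sum, Finset.sum_comm]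
      have hinner : ∀ t ∈ range m,
          ∑ i ∈ range m, ((ζ⁻¹ ^ i) ^ t) • (g ^ t) v
            = (if t = 0 then (m : k) else 0) • (g ^ t) v := by
        intro t ht
        have hcomm : ∀ i : ℕ, ((ζ⁻¹ ^ i) ^ t) = ((ζ⁻¹ ^ t) ^ i) := fun i => by
          rw [← pow_mul, ← pow_mul, mul_comm]
        simp_rw [hcomm, ← Finset.sum_smul]
        congr 1
        by_cases ht0 : t = 0
        · simp [ht0]
        · rw [if_neg ht0]
          have hx1 : (ζ⁻¹ ^ t) ≠ 1 := by
            rw [inv_pow, ne_eq, inv_eq_one]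
            exact hζ.pow_ne_one_of_pos_of_lt ht0 (mem_range.mp ht)
          have hxm : (ζ⁻¹ ^ t) ^ m = 1 := by
            rw [← pow_mul, mul_comm t m, pow_mul, inv_pow, hζ.pow_eq_one, inv_one, one_pow]
          have hgeo := geom_sum_mul (ζ⁻¹ ^ t) m
          rw [hxm, sub_self] at hgeo
          exact (mul_eq_zero.mp hgeo).resolve_right (sub_ne_zero.mpr hx1)
      rw [Finset.sum_congr rfl hinner, Finset.sum_eq_single 0]
      · simp [hmk]
      · intro t _ ht0; rw [if_neg ht0, zero_smul]
      · intro h; exact absurd (mem_range.mpr (Nat.pos_of_ne_zero hm0)) h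
    rw [← hsum]
    exact Submodule.sum_mem _ fun i hi => Submodule.subset_span (hmem i (mem_range.mp hi))
  obtain ⟨s, hsE, hspan', hli⟩ := exists_linearIndependent k E
  have hspan'' : ⊤ ≤ Submodule.span k (Set.range ((↑) : s → V)) := by
    rw [Subtype.range_coe, hspan']
    exact hspan
  have hfin : s.Finite := hli.set_finite_of_isNoetherian
  have : Fintype s := hfin.fintype
  refine ⟨s, this, Module.Basis.mk hli hspan'', fun j => (hsE j.2).choose, ?_, ?_⟩
  · exact fun j => (hsE j.2).choose_spec.1
  · intro j
    rw [Module.Basis.mk_apply]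
    exact (hsE j.2).choose_spec.2
end

section
variable {k V : Type*} [Field k] [AddCommGroup V] [Module k V]

-- coordinates of g v in an eigenbasis
lemma aux_repr_g {ι : Type*} [Fintype ι] (b : Module.Basis ι k V) (g : V ≃ₗ[k] V) (c : ι → k)
    (hgb : ∀ j, g (b j) = c j • b j) (v : V) (j : ι) :
    b.repr (g v) j = c j * b.repr v j := by
  have h : g v = ∑ t, (c t * b.repr v t) • b t := by
    conv_lhs => rw [← b.sum_repr v]
    rw [map_sum]
    refine Finset.sum_congr rfl fun t _ => ?_
    rw [map_smul, hgb t, smul_smul, mul_comm]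
  rw [h, b.repr_sum_self]

lemma aux_finrank_eigensp [FiniteDimensional k V] [DecidableEq k] {ι : Type*} [Fintype ι] [DecidableEq ι]
    (b : Module.Basis ι k V) (g : V ≃ₗ[k] V) (c : ι → k) (hgb : ∀ j, g (b j) = c j • b j) (lam : k) :
    Module.finrank k (LinearMap.ker ((g : V →ₗ[k] V) - lam • LinearMap.id))
      = (Finset.univ.filter (fun j => c j = lam)).card := by
  classical
  set K := LinearMap.ker ((g : V →ₗ[k] V) - lam • LinearMap.id) with hK
  have hmemK : ∀ v : V, v ∈ K ↔ g v = lam • v := by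
    intro v
    rw [hK, LinearMap.mem_ker, LinearMap.sub_apply, LinearMap.smul_apply, LinearMap.id_apply,
      sub_eq_zero]
    rfl
  set s : Finset ι := Finset.univ.filter (fun j => c j = lam) with hs
  have hKspan : K = Submodule.span k (Set.range (fun j : s => b j)) := by
    apply le_antisymm
    · intro v hv
      rw [hmemK] at hv
      have hcoef : ∀ j, j ∉ s → b.repr v j = 0 := by
        intro j hj
        have h1 : c j * b.repr v j = lam * b.repr v j := by
          rw [← aux_repr_g b g c hgb v j, hv, map_smul]
          rfl
        have h2 : c j ≠ lam := by
          intro h; exact hj (by simp [hs, h])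
        rcases mul_eq_mul_right_iff.mp h1 with h | h
        · exact absurd h h2
        · exact h
      have hz : ∀ j ∈ Finset.univ, j ∉ s → b.repr v j • b j = 0 := fun j _ hj => by
        rw [hcoef j hj, zero_smul]
      have : v = ∑ j ∈ s, b.repr v j • b j := by
        rw [Finset.sum_subset (Finset.subset_univ s) hz]
        exact (b.sum_repr v).symm
      rw [this]
      refine Submodule.sum_mem _ fun j hj => Submodule.smul_mem _ _ ?_
      exact Submodule.subset_span ⟨⟨j, hj⟩, rfl⟩
    · rw [Submodule.span_le]
      rintro _ ⟨⟨j, hj⟩, rfl⟩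
      rw [SetLike.mem_coe, hmemK, hgb j]
      simp only [hs, Finset.mem_filter] at hj
      rw [hj.2]
  have hli : LinearIndependent k (fun j : s => b j) :=
    b.linearIndependent.comp _ Subtype.val_injective
  rw [hKspan, finrank_span_eq_card hli, Fintype.card_coe]
end

section
variable {k V : Type*} [Field k] [AddCommGroup V] [Module k V]

lemma aux_dvd_small {m s : ℕ} (hm : 0 < m) (h : m ∣ s) (hs : s < 2 * m) : s = 0 ∨ s = m := by
  by_cases h0 : s = 0
  · exact Or.inl h0
  · right
    have hsm : m ≤ s := Nat.le_of_dvd (Nat.pos_of_ne_zero h0) h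
    have hd' : m ∣ s - m := (Nat.dvd_sub h dvd_rfl)
    have hz : s - m = 0 := by
      by_contra hnz
      exact absurd (Nat.le_of_dvd (Nat.pos_of_ne_zero hnz) hd') (by omega)
    omega

lemma aux_finrank_le [FiniteDimensional k V] {m : ℕ} (hm : 1 ≤ m) {ζ : k}
    (hζ : IsPrimitiveRoot ζ m) (g : V ≃ₗ[k] V)
    (B : V →ₗ[k] V →ₗ[k] k)
    (hB : ∀ x : V, (∀ y : V, B x y = 0) → x = 0)
    (hBg : ∀ x y : V, B (g x) (g y) = B x y)
    {ι : Type*} [Fintype ι] (b : Module.Basis ι k V) (c : ι → ℕ) (hc : ∀ j, c j < m)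
    (hgb : ∀ j, g (b j) = ζ ^ (c j) • b j)
    (i i' : ℕ) (hi : i < m) (hi' : i' < m) (hii' : (i + i') % m = 0) :
    Module.finrank k (LinearMap.ker ((g : V →ₗ[k] V) - (ζ ^ i) • LinearMap.id))
      ≤ Module.finrank k (LinearMap.ker ((g : V →ₗ[k] V) - (ζ ^ i') • LinearMap.id)) := by
  classical
  set K1 := LinearMap.ker ((g : V →ₗ[k] V) - (ζ ^ i) • LinearMap.id) with hK1
  set K2 := LinearMap.ker ((g : V →ₗ[k] V) - (ζ ^ i') • LinearMap.id) with hK2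
  have hmem : ∀ (lam : k) (v : V),
      v ∈ LinearMap.ker ((g : V →ₗ[k] V) - lam • LinearMap.id) ↔ g v = lam • v := by
    intro lam v
    rw [LinearMap.mem_ker, LinearMap.sub_apply, LinearMap.smul_apply, LinearMap.id_apply,
      sub_eq_zero]
    rfl
  set Φ : K1 →ₗ[k] (K2 →ₗ[k] k) :=
    (((B.comp K1.subtype).flip.comp K2.subtype).flip) with hΦ
  have hΦapp : ∀ (x : K1) (y : K2), Φ x y = B x.1 y.1 := fun x y => rfl
  have hinj : Function.Injective Φ := by
    rw [injective_iff_map_eq_zero]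
    intro x hx
    have hxv : g x.1 = ζ ^ i • x.1 := (hmem _ _).mp x.2
    have hzero : ∀ y : V, B x.1 y = 0 := by
      have hbt : ∀ t : ι, B x.1 (b t) = 0 := by
        intro t
        by_cases hct : c t = i'
        · have hyK2 : (b t) ∈ K2 := by
            rw [hmem, hgb t, hct]
          have := hx ▸ hΦapp x ⟨b t, hyK2⟩
          simpa using this.symm
        · have h1 : ζ ^ (i + c t) * B x.1 (b t) = B x.1 (b t) := by
            have heq := hBg x.1 (b t)
            rw [hxv, hgb t] at heq
            simp only [map_smul, LinearMap.smul_apply, smul_eq_mul] at heq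
            rw [← mul_assoc, ← pow_add, add_comm (c t) i] at heq
            exact heq
          have hne : ζ ^ (i + c t) ≠ 1 := by
            have hd : ¬ (m ∣ (i + c t)) := by
              have h2 : m ∣ (i + i') := Nat.dvd_of_mod_eq_zero hii'
              intro h3
              have hct' := hc t
              have e1 := aux_dvd_small (by omega) h2 (by omega)
              have e2 := aux_dvd_small (by omega) h3 (by omega)
              omega
            exact fun h => hd ((hζ.pow_eq_one_iff_dvd _).mp h)
          by_contra hne0
          nth_rewrite 2 [← one_mul (B x.1 (b t))] at h1
          exact hne (mul_right_cancel₀ hne0 h1)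
      intro y
      conv_lhs => rw [← b.sum_repr y, map_sum]
      refine Finset.sum_eq_zero fun t _ => ?_
      rw [map_smul, hbt t, smul_zero]
    have : x.1 = 0 := hB x.1 hzero
    exact Subtype.ext this
  calc Module.finrank k K1 ≤ Module.finrank k (K2 →ₗ[k] k) :=
        LinearMap.finrank_le_finrank_of_injective hinj
    _ = Module.finrank k K2 := Subspace.dual_finrank_eq
end

section
variable {k V : Type*} [Field k] [AddCommGroup V] [Module k V]

lemma aux_repr_g' {ι : Type*} [Fintype ι] (b : Module.Basis ι k V) (g : V ≃ₗ[k] V) (c : ι → k)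
    (hgb : ∀ j, g (b j) = c j • b j) (v : V) (j : ι) :
    b.repr (g v) j = c j * b.repr v j := by
  have h : g v = ∑ t, (c t * b.repr v t) • b t := by
    conv_lhs => rw [← b.sum_repr v]
    rw [map_sum]
    refine Finset.sum_congr rfl fun t _ => ?_
    rw [map_smul, hgb t, smul_smul, mul_comm]
  rw [h, b.repr_sum_self]

set_option maxHeartbeats 1000000 in
lemma aux_quot_dim [FiniteDimensional k V] {m : ℕ} (hm : 1 ≤ m) {ζ : k}
    (hζ : IsPrimitiveRoot ζ m)
    (g : V ≃ₗ[k] V)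
    (σ : PowerSeries k ⊗[k] V →ₗ[k] PowerSeries k ⊗[k] V)
    (hσ : ∀ (f : PowerSeries k) (v : V),
      σ (f ⊗ₜ[k] v) = PowerSeries.rescale ζ f ⊗ₜ[k] g v)
    {ι : Type*} [Fintype ι] [DecidableEq ι]
    (b : Module.Basis ι k V) (ind : ι → ℕ) (hilt : ∀ j, ind j < m)
    (hgb : ∀ j, g (b j) = ζ ^ (ind j) • b j) :
    Module.finrank k
        ((PowerSeries k ⊗[k] V) ⧸
          (Submodule.span (PowerSeries k)
            {x : PowerSeries k ⊗[k] V | σ x = x}).restrictScalars k)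
      = ∑ j, (m - ind j) % m := by
  classical
  set n : ι → ℕ := fun j => (m - ind j) % m with hn
  have hnlt : ∀ j, n j < m := fun j => Nat.mod_lt _ (by omega)
  have hnval : ∀ j, ind j + n j = if ind j = 0 then 0 else m := by
    intro j
    by_cases h0 : ind j = 0
    · simp [hn, h0, Nat.mod_self]
    · have := hilt j
      rw [if_neg h0, hn]
      simp only
      rw [Nat.mod_eq_of_lt (by omega)]
      omega
  set S := (Submodule.span (PowerSeries k)
      {x : PowerSeries k ⊗[k] V | σ x = x}) with hS
  set cmap : ι → (PowerSeries k ⊗[k] V →ₗ[k] PowerSeries k) := fun j =>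
    (TensorProduct.rid k (PowerSeries k)).toLinearMap ∘ₗ
      LinearMap.lTensor (PowerSeries k) (b.coord j) with hcmap
  have h1 : ∀ (j : ι) (f : PowerSeries k) (v : V),
      cmap j (f ⊗ₜ[k] v) = b.repr v j • f := by
    intro j f v
    simp [hcmap, Module.Basis.coord_apply]
  have h2 : ∀ (j : ι) (q : PowerSeries k) (x : PowerSeries k ⊗[k] V),
      cmap j (q • x) = q * cmap j x := by
    intro j q x
    induction x using TensorProduct.induction_on with
    | zero => rw [smul_zero, map_zero, mul_zero]
    | tmul f v => rw [smul_tmul', smul_eq_mul, h1, h1, mul_smul_comm]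
    | add x y hx hy => rw [smul_add, map_add, map_add, mul_add, hx, hy]
  have h3 : ∀ x : PowerSeries k ⊗[k] V, ∑ j, (cmap j x) ⊗ₜ[k] (b j : V) = x := by
    intro x
    induction x using TensorProduct.induction_on with
    | zero => simp
    | tmul f v =>
        calc ∑ j, (cmap j (f ⊗ₜ[k] v)) ⊗ₜ[k] (b j : V)
            = ∑ j, f ⊗ₜ[k] (b.repr v j • b j) := by
              refine Finset.sum_congr rfl fun j _ => ?_
              rw [h1, smul_tmul]
          _ = f ⊗ₜ[k] v := by
              rw [← TensorProduct.tmul_sum, b.sum_repr v]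
    | add x y hx hy =>
        simp only [map_add, TensorProduct.add_tmul]
        rw [Finset.sum_add_distrib, hx, hy]
  have h4 : ∀ (j : ι) (x : PowerSeries k ⊗[k] V) (l : ℕ),
      PowerSeries.coeff l (cmap j (σ x))
        = ζ ^ (ind j + l) * PowerSeries.coeff l (cmap j x) := by
    intro j x l
    induction x using TensorProduct.induction_on with
    | zero => simp
    | tmul f v =>
        rw [hσ, h1, h1, map_smul, map_smul, smul_eq_mul, smul_eq_mul,
          PowerSeries.coeff_rescale,
          aux_repr_g' b g (fun t => ζ ^ ind t) hgb v j, pow_add]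
        ring
    | add x y hx hy =>
        simp only [map_add, mul_add, hx, hy]
  have h5 : ∀ j : ι, σ (((X : PowerSeries k) ^ (n j)) ⊗ₜ[k] (b j : V))
      = ((X : PowerSeries k) ^ (n j)) ⊗ₜ[k] (b j : V) := by
    intro j
    have hres : PowerSeries.rescale ζ ((X : PowerSeries k) ^ (n j))
        = (ζ ^ (n j)) • (X : PowerSeries k) ^ (n j) := by
      ext t
      rw [PowerSeries.coeff_rescale, map_smul, smul_eq_mul,
        PowerSeries.coeff_X_pow]
      by_cases ht : t = n j
      · rw [ht]
      · rw [if_neg ht, mul_zero, mul_zero]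
    rw [hσ, hgb j, hres, TensorProduct.tmul_smul, ← TensorProduct.smul_tmul', smul_smul]
    have hone : ζ ^ (ind j) * ζ ^ (n j) = 1 := by
      rw [← pow_add]
      refine (hζ.pow_eq_one_iff_dvd _).mpr ?_
      rw [hnval j]
      split <;> simp
    rw [hone, one_smul]
  -- the submodule of elements all of whose coordinates are divisible by X^(n j)
  set K : Submodule (PowerSeries k) (PowerSeries k ⊗[k] V) :=
    { carrier := {x | ∀ j, (X : PowerSeries k) ^ (n j) ∣ cmap j x}
      add_mem' := fun hx hy j => by rw [map_add]; exact dvd_add (hx j) (hy j)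
      zero_mem' := fun j => by rw [map_zero]; exact dvd_zero _
      smul_mem' := fun q x hx j => by rw [h2]; exact (hx j).mul_left q } with hK
  have hfixK : {x : PowerSeries k ⊗[k] V | σ x = x} ⊆ (K : Set (PowerSeries k ⊗[k] V)) := by
    intro x hx j
    rw [PowerSeries.X_pow_dvd_iff]
    intro l hl
    have hind0 : ind j ≠ 0 := by
      intro h0
      rw [hn] at hl
      simp only [h0, Nat.sub_zero, Nat.mod_self] at hl
      omega
    have hlm : ind j + l < m := by
      have := hnval j
      rw [if_neg hind0] at this
      omega
    have heq : PowerSeries.coeff l (cmap j x)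
        = ζ ^ (ind j + l) * PowerSeries.coeff l (cmap j x) := by
      conv_lhs => rw [← hx]
      exact h4 j x l
    have hne : ζ ^ (ind j + l) ≠ 1 :=
      hζ.pow_ne_one_of_pos_of_lt (by omega) hlm
    by_contra h0
    nth_rewrite 1 [← one_mul (PowerSeries.coeff l (cmap j x))] at heq
    exact hne (mul_right_cancel₀ h0 heq).symm
  have hSK : S ≤ K := Submodule.span_le.mpr hfixK
  have hKS : ∀ x : PowerSeries k ⊗[k] V, (∀ j, (X : PowerSeries k) ^ (n j) ∣ cmap j x) →
      x ∈ S := by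
    intro x hx
    rw [← h3 x]
    refine Submodule.sum_mem _ fun j _ => ?_
    obtain ⟨q, hq⟩ := hx j
    rw [hq, mul_comm, ← smul_eq_mul, ← TensorProduct.smul_tmul']
    exact Submodule.smul_mem _ q (Submodule.subset_span (h5 j))
  -- the truncation map
  set φ : (PowerSeries k ⊗[k] V) →ₗ[k] ((j : ι) → Fin (n j) → k) :=
    LinearMap.pi (fun j => LinearMap.pi
      (fun l : Fin (n j) => (PowerSeries.coeff (l : ℕ)) ∘ₗ cmap j)) with hφ
  have hφapp : ∀ (x : PowerSeries k ⊗[k] V) (j : ι) (l : Fin (n j)),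
      φ x j l = PowerSeries.coeff (l : ℕ) (cmap j x) := fun x j l => rfl
  have hker : LinearMap.ker φ = S.restrictScalars k := by
    ext x
    rw [LinearMap.mem_ker, Submodule.restrictScalars_mem]
    constructor
    · intro hx
      refine hKS x fun j => ?_
      rw [PowerSeries.X_pow_dvd_iff]
      intro l hl
      have := congrFun (congrFun hx j) ⟨l, hl⟩
      rwa [hφapp] at this
    · intro hx
      have hxK := hSK hx
      funext j l
      have := (PowerSeries.X_pow_dvd_iff.mp (hxK j)) l l.2
      rw [hφapp, this]
      rfl
  have hsurj : Function.Surjective φ := by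
    intro w
    refine ⟨∑ j, ∑ l : Fin (n j), w j l • (((X : PowerSeries k) ^ (l : ℕ)) ⊗ₜ[k] (b j : V)), ?_⟩
    funext j' l'
    rw [hφapp]
    simp only [map_sum, map_smul, h1, Module.Basis.repr_self_apply, smul_eq_mul, smul_smul]
    rw [Finset.sum_eq_single_of_mem j' (Finset.mem_univ j')]
    · rw [Finset.sum_eq_single_of_mem l' (Finset.mem_univ l')]
      · simp [PowerSeries.coeff_X_pow]
      · intro l _ hl
        have : ((l' : ℕ) : ℕ) ≠ (l : ℕ) := fun h => hl (Fin.ext h).symm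
        simp [PowerSeries.coeff_X_pow, if_neg this]
    · intro j _ hj
      refine Finset.sum_eq_zero fun l _ => ?_
      simp [if_neg hj]
  have hquot : Module.finrank k
      ((PowerSeries k ⊗[k] V) ⧸ S.restrictScalars k)
        = Module.finrank k ((j : ι) → Fin (n j) → k) := by
    have e1 := Submodule.quotEquivOfEq _ _ hker.symm
    have e2 := φ.quotKerEquivOfSurjective hsurj
    exact (e1.trans e2).finrank_eq
  rw [hquot, Module.finrank_pi_fintype k]
  refine Finset.sum_congr rfl fun j _ => ?_
  rw [Module.finrank_pi k, Fintype.card_fin]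
end


set_option maxHeartbeats 1000000 in
/-- Same setup as Statement 6 (`ζ` a primitive `m`-th root of unity,
`g^m = 1` on the finite-dimensional space `V`, `σ(f ⊗ v) = f(ζX) ⊗ g(v)` on `k⟦X⟧ ⊗ V`,
`S` the `k⟦X⟧`-submodule generated by the `σ`-fixed elements); assume in addition that
`V` carries a nondegenerate `g`-invariant bilinear form `B`.  Then
`2·dim_k((k⟦X⟧ ⊗ V)/S) = m·(dim_k V − dim_k V^g)`. -/
theorem quotient_dim_via_invariant_bilinear_form
    {k V : Type*} [Field k] [AddCommGroup V] [Module k V] [FiniteDimensional k V]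
    {m : ℕ} (hm : 1 ≤ m) {ζ : k} (hζ : IsPrimitiveRoot ζ m)
    (g : V ≃ₗ[k] V) (hg : g ^ m = 1)
    (σ : PowerSeries k ⊗[k] V →ₗ[k] PowerSeries k ⊗[k] V)
    (hσ : ∀ (f : PowerSeries k) (v : V),
      σ (f ⊗ₜ[k] v) = PowerSeries.rescale ζ f ⊗ₜ[k] g v)
    (B : V →ₗ[k] V →ₗ[k] k)
    (hB : ∀ x : V, (∀ y : V, B x y = 0) → x = 0)
    (hBg : ∀ x y : V, B (g x) (g y) = B x y) :
    2 * Module.finrank k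
        ((PowerSeries k ⊗[k] V) ⧸
          (Submodule.span (PowerSeries k)
            {x : PowerSeries k ⊗[k] V | σ x = x}).restrictScalars k) =
      m * (Module.finrank k V -
        Module.finrank k (LinearMap.ker ((g : V →ₗ[k] V) - LinearMap.id))) := by
  classical
  obtain ⟨s, hfs, b, ind, hilt, hgb⟩ := aux_exists_eigenbasis hm hζ g hg
  haveI := hfs
  rw [aux_quot_dim hm hζ g σ hσ b ind hilt hgb]
  set cnt : ℕ → ℕ := fun a => (Finset.univ.filter (fun j => ind j = a)).card with hcnt
  have hdim : Module.finrank k V = Fintype.card s := Module.finrank_eq_card_basis b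
  have hcard : Fintype.card s = ∑ a ∈ range m, cnt a := by
    rw [← Finset.card_univ]
    exact Finset.card_eq_sum_card_fiberwise (fun j _ => Finset.mem_range.mpr (hilt j))
  -- identify eigenspace dimensions with fiber cardinalities
  have hdimE : ∀ a, a < m →
      Module.finrank k (LinearMap.ker ((g : V →ₗ[k] V) - (ζ ^ a) • LinearMap.id)) = cnt a := by
    intro a ha
    rw [aux_finrank_eigensp b g (fun j => ζ ^ ind j) hgb (ζ ^ a)]
    congr 1
    apply Finset.filter_congr
    intro j _
    exact ⟨fun h => hζ.pow_inj (hilt j) ha h, fun h => by rw [h]⟩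
  have hcnteq : ∀ a, a < m → cnt a = cnt ((m - a) % m) := by
    intro a ha
    have ha' : (m - a) % m < m := Nat.mod_lt _ (by omega)
    have hmod : (a + (m - a) % m) % m = 0 := by
      by_cases h0 : a = 0
      · simp [h0, Nat.mod_self]
      · rw [Nat.mod_eq_of_lt (by omega : m - a < m)]
        have : a + (m - a) = m := by omega
        rw [this, Nat.mod_self]
    have hmod' : ((m - a) % m + a) % m = 0 := by rwa [add_comm] at hmod
    rw [← hdimE a ha, ← hdimE _ ha']
    exact le_antisymm
      (aux_finrank_le hm hζ g B hB hBg b ind hilt hgb a _ ha ha' hmod)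
      (aux_finrank_le hm hζ g B hB hBg b ind hilt hgb _ a ha' ha hmod')
  have hfix : Module.finrank k (LinearMap.ker ((g : V →ₗ[k] V) - LinearMap.id)) = cnt 0 := by
    have h1 : LinearMap.ker ((g : V →ₗ[k] V) - LinearMap.id)
        = LinearMap.ker ((g : V →ₗ[k] V) - (ζ ^ 0 : k) • LinearMap.id) := by
      rw [pow_zero, one_smul]
    rw [h1]
    exact hdimE 0 (by omega)
  -- fiberwise sum
  have hsumfib : ∑ j, (m - ind j) % m = ∑ a ∈ range m, ((m - a) % m) * cnt a := by
    rw [← Finset.sum_fiberwise_of_maps_to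
      (fun j (_ : j ∈ Finset.univ) => Finset.mem_range.mpr (hilt j))
      (fun j => (m - ind j) % m)]
    refine Finset.sum_congr rfl fun a _ => ?_
    have : ∀ j ∈ Finset.univ.filter (fun j => ind j = a), (m - ind j) % m = (m - a) % m := by
      intro j hj
      rw [(Finset.mem_filter.mp hj).2]
    rw [Finset.sum_congr rfl this, Finset.sum_const, smul_eq_mul, mul_comm]
  have hswap : ∑ a ∈ range m, ((m - a) % m) * cnt a = ∑ a ∈ range m, a * cnt a := by
    refine Finset.sum_nbij' (fun a => (m - a) % m) (fun a => (m - a) % m) ?_ ?_ ?_ ?_ ?_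
    · intro a ha; exact Finset.mem_range.mpr (Nat.mod_lt _ (by omega))
    · intro a ha; exact Finset.mem_range.mpr (Nat.mod_lt _ (by omega))
    · intro a ha
      have ha' := Finset.mem_range.mp ha
      show (m - (m - a) % m) % m = a
      by_cases h0 : a = 0
      · simp [h0, Nat.mod_self]
      · rw [Nat.mod_eq_of_lt (by omega : m - a < m), Nat.mod_eq_of_lt (by omega)]
        omega
    · intro a ha
      have ha' := Finset.mem_range.mp ha
      show (m - (m - a) % m) % m = a
      by_cases h0 : a = 0
      · simp [h0, Nat.mod_self]
      · rw [Nat.mod_eq_of_lt (by omega : m - a < m), Nat.mod_eq_of_lt (by omega)]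
        omega
    · intro a ha
      have ha' := Finset.mem_range.mp ha
      show (m - a) % m * cnt a = (m - a) % m * cnt ((m - a) % m)
      rw [← hcnteq a ha']
  have h0mem : (0 : ℕ) ∈ range m := Finset.mem_range.mpr (by omega)
  have hsplit : ∑ a ∈ range m, cnt a = cnt 0 + ∑ a ∈ (range m).erase 0, cnt a :=
    (Finset.add_sum_erase _ cnt h0mem).symm
  rw [hsumfib, hdim, hfix, hcard, hsplit, Nat.add_sub_cancel_left]
  have htwo : 2 * ∑ a ∈ range m, ((m - a) % m) * cnt a
      = ∑ a ∈ range m, ((m - a) % m + a) * cnt a := by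
    rw [two_mul]
    nth_rewrite 2 [hswap]
    rw [← Finset.sum_add_distrib]
    refine Finset.sum_congr rfl fun a _ => ?_
    rw [add_mul]
  rw [htwo]
  have hterm : ∑ a ∈ range m, ((m - a) % m + a) * cnt a
      = ∑ a ∈ (range m).erase 0, m * cnt a := by
    rw [← Finset.add_sum_erase _ _ h0mem]
    have hz : ((m - 0) % m + 0) * cnt 0 = 0 := by
      rw [Nat.sub_zero, Nat.mod_self, zero_add, zero_mul]
    rw [hz, zero_add]
    refine Finset.sum_congr rfl fun a ha => ?_
    have h0 : a ≠ 0 := (Finset.mem_erase.mp ha).1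
    have ha' := Finset.mem_range.mp (Finset.mem_erase.mp ha).2
    rw [Nat.mod_eq_of_lt (by omega : m - a < m)]
    congr 1
    omega
  rw [hterm, ← Finset.mul_sum]
end

section
/- Let G be a group, τ an automorphism of G, and J a subgroup of G with τ(J) = J. Say two elements j, j′ of J are τ-conjugate in J if j′ = h j τ(h)⁻¹ for some h ∈ J, and define τ-conjugacy in G similarly; write G^τ = {x ∈ G : τ(x) = x}. Consider the right-coset space J\G with the action Jg ↦ Jτ(g), and let (J\G)^τ denote its fixed points. Then: (i) for every fixed coset Jg, the element g·τ(g)⁻¹ lies in J and its τ-conjugacy class in J depends only on the coset Jg; (ii) two fixed cosets Jg and Jg′ yield τ-conjugate elements of J if and only if g′ ∈ J·g·G^τ; (iii) a τ-conjugacy class of J arises in this way if and only if it consists of elements of the form x·τ(x)⁻¹ with x ∈ G. Consequently, the map Jg ↦ [g·τ(g)⁻¹] induces a bijection from the set of orbits of G^τ (acting by right translation) on (J\G)^τ onto the kernel of the natural map of pointed sets from the τ-conjugacy classes of J to the τ-conjugacy classes of G. -/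
private lemma fix_aux {G : Type*} [Group G] (τ : G ≃* G) {a b : G}
    (h : a * (τ a)⁻¹ = b * (τ b)⁻¹) : ∃ x : G, τ x = x ∧ a = b * x := by
  refine ⟨b⁻¹ * a, ?_, by group⟩
  have h1 : b⁻¹ * a = (τ b)⁻¹ * τ a := by
    have := congrArg (fun z => b⁻¹ * z * τ a) h
    simpa [mul_assoc] using this
  rw [map_mul, map_inv, ← h1]

private lemma conj_aux {G : Type*} [Group G] (τ : G ≃* G) (j g : G) :
    (j * g) * (τ (j * g))⁻¹ = j * (g * (τ g)⁻¹) * (τ j)⁻¹ := by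
  simp [map_mul, mul_inv_rev, mul_assoc]

private lemma conj_aux' {G : Type*} [Group G] (τ : G ≃* G) (j g x : G)
    (hx : τ x = x) :
    (j * g * x) * (τ (j * g * x))⁻¹ = j * (g * (τ g)⁻¹) * (τ j)⁻¹ := by
  simp [map_mul, hx, mul_inv_rev, mul_assoc]

/-- Let `G` be a group, `τ` an automorphism of `G`, and `J` a
`τ`-stable subgroup.  Consider the right-coset space `J\G` with the action
`Jg ↦ Jτ(g)`; a coset `Jg` is fixed iff `τ(g)g⁻¹ ∈ J`.  Then:
(i) for every fixed coset `Jg` the element `g·τ(g)⁻¹` lies in `J`, and its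
`τ`-conjugacy class in `J` depends only on the coset;
(ii) two fixed cosets yield `τ`-conjugate elements of `J` iff `g′ ∈ J·g·G^τ`;
(iii) a `τ`-conjugacy class of `J` arises in this way iff it consists of elements of the
form `x·τ(x)⁻¹` with `x ∈ G`.
Consequently `Jg ↦ [g·τ(g)⁻¹]` induces a bijection from the set of `G^τ`-orbits on the
fixed cosets onto the kernel of the map from the `τ`-conjugacy classes of `J` to those of
`G`. -/
theorem twisted_cosets_invariant_bijection
    {G : Type*} [Group G] (τ : G ≃* G) (J : Subgroup G)
    (hJ : ∀ x : G, τ x ∈ J ↔ x ∈ J) :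
    -- (i) fixed cosets give elements of J ...
    (∀ g : G, τ g * g⁻¹ ∈ J → g * (τ g)⁻¹ ∈ J) ∧
    -- ... whose τ-conjugacy class in J only depends on the coset
    (∀ g j : G, j ∈ J → g * (τ g)⁻¹ ∈ J →
      ∃ h ∈ J, (j * g) * (τ (j * g))⁻¹ = h * (g * (τ g)⁻¹) * (τ h)⁻¹) ∧
    -- (ii)
    (∀ g g' : G, g * (τ g)⁻¹ ∈ J → g' * (τ g')⁻¹ ∈ J →
      ((∃ h ∈ J, g' * (τ g')⁻¹ = h * (g * (τ g)⁻¹) * (τ h)⁻¹) ↔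
        ∃ j ∈ J, ∃ x : G, τ x = x ∧ g' = j * g * x)) ∧
    -- (iii)
    (∀ j ∈ J,
      ((∃ h ∈ J, ∃ g : G, g * (τ g)⁻¹ ∈ J ∧ j = h * (g * (τ g)⁻¹) * (τ h)⁻¹) ↔
        ∃ x : G, j = x * (τ x)⁻¹)) ∧
    -- consequently: the induced map on quotients is a bijection
    ∃ e : Quot (fun g g' : {g : G // g * (τ g)⁻¹ ∈ J} =>
            ∃ j ∈ J, ∃ x : G, τ x = x ∧ (g' : G) = j * (g : G) * x) ≃
          Quot (fun y y' : {j : G // j ∈ J ∧ ∃ x : G, j = x * (τ x)⁻¹} =>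
            ∃ h ∈ J, (y' : G) = h * (y : G) * (τ h)⁻¹),
      ∀ g : {g : G // g * (τ g)⁻¹ ∈ J},
        e (Quot.mk _ g) = Quot.mk _ ⟨(g : G) * (τ (g : G))⁻¹, g.2, ⟨(g : G), rfl⟩⟩ := by
  refine ⟨?_, ?_, ?_, ?_, ?_⟩
  · intro g hg
    simpa [mul_inv_rev] using J.inv_mem hg
  · intro g j hj _
    exact ⟨j, hj, conj_aux τ j g⟩
  · intro g g' _ _
    constructor
    · rintro ⟨h, hh, heq⟩
      rw [← conj_aux τ h g] at heq
      obtain ⟨x, hx, hgx⟩ := fix_aux τ heq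
      exact ⟨h, hh, x, hx, by rw [hgx]⟩
    · rintro ⟨j, hj, x, hx, rfl⟩
      exact ⟨j, hj, conj_aux' τ j g x hx⟩
  · intro j hj
    constructor
    · rintro ⟨h, _, g, _, rfl⟩
      exact ⟨h * g, (conj_aux τ h g).symm⟩
    · rintro ⟨x, rfl⟩
      exact ⟨1, J.one_mem, x, hj, by simp⟩
  · set r1 : {g : G // g * (τ g)⁻¹ ∈ J} → {g : G // g * (τ g)⁻¹ ∈ J} → Prop :=
      fun g g' => ∃ j ∈ J, ∃ x : G, τ x = x ∧ (g' : G) = j * (g : G) * x with hr1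
    set r2 : {j : G // j ∈ J ∧ ∃ x : G, j = x * (τ x)⁻¹} →
        {j : G // j ∈ J ∧ ∃ x : G, j = x * (τ x)⁻¹} → Prop :=
      fun y y' => ∃ h ∈ J, (y' : G) = h * (y : G) * (τ h)⁻¹ with hr2
    have sound1 : ∀ a b, r1 a b →
        Quot.mk r2 ⟨(a : G) * (τ (a : G))⁻¹, a.2, ⟨(a : G), rfl⟩⟩ =
        Quot.mk r2 ⟨(b : G) * (τ (b : G))⁻¹, b.2, ⟨(b : G), rfl⟩⟩ := by
      rintro a b ⟨j, hj, x, hx, hab⟩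
      apply Quot.sound
      refine ⟨j, hj, ?_⟩
      show (b : G) * (τ (b : G))⁻¹ = j * ((a : G) * (τ (a : G))⁻¹) * (τ j)⁻¹
      rw [hab]; exact conj_aux' τ j a x hx
    have sound2 : ∀ a b : {j : G // j ∈ J ∧ ∃ x : G, j = x * (τ x)⁻¹}, r2 a b →
        Quot.mk r1 ⟨Classical.choose a.2.2,
            by rw [← Classical.choose_spec a.2.2]; exact a.2.1⟩ =
        Quot.mk r1 ⟨Classical.choose b.2.2,
            by rw [← Classical.choose_spec b.2.2]; exact b.2.1⟩ := by
      rintro a b ⟨h, hh, hab⟩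
      apply Quot.sound
      have ha := Classical.choose_spec a.2.2
      have hb := Classical.choose_spec b.2.2
      have heq : Classical.choose b.2.2 * (τ (Classical.choose b.2.2))⁻¹ =
          (h * Classical.choose a.2.2) * (τ (h * Classical.choose a.2.2))⁻¹ := by
        rw [conj_aux τ h, ← ha, ← hb, ← hab]
      obtain ⟨x, hx, hbx⟩ := fix_aux τ heq
      exact ⟨h, hh, x, hx, hbx⟩
    refine ⟨⟨Quot.lift (fun g => Quot.mk r2
        ⟨(g : G) * (τ (g : G))⁻¹, g.2, ⟨(g : G), rfl⟩⟩) sound1,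
      Quot.lift (fun y => Quot.mk r1 ⟨Classical.choose y.2.2,
        by rw [← Classical.choose_spec y.2.2]; exact y.2.1⟩) sound2,
      ?_, ?_⟩, fun g => rfl⟩
    · apply Quot.ind
      intro g
      apply Quot.sound
      have hs := Classical.choose_spec
        (⟨(g : G), rfl⟩ : ∃ x : G, (g : G) * (τ (g : G))⁻¹ = x * (τ x)⁻¹)
      obtain ⟨x, hx, hgx⟩ := fix_aux τ hs
      exact ⟨1, J.one_mem, x, hx, by rw [one_mul]; exact hgx⟩
    · apply Quot.ind
      intro y
      show Quot.mk r2 _ = Quot.mk r2 y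
      congr 1
      exact Subtype.ext (Classical.choose_spec y.2.2).symm
end

section
/- Let W be a finite group and 0 → A → B → C → 0 a short exact sequence of abelian groups equipped with compatible actions of W by automorphisms (the maps are W-equivariant), with W acting trivially on C. Assume the coinvariant group A_W is finite. Let T = Hom(B, ℂˣ) with the contragredient W-action, and let Z ⊆ T be the image of the injective map Hom(C, ℂˣ) → Hom(B, ℂˣ) induced by B → C. Then Z is contained in the W-invariants T^W, the groups T^W/Z and Hom(A, ℂˣ)^W are finite, and |Ker(A_W → B_W)| · |T^W/Z| = |Hom(A, ℂˣ)^W|. -/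
/-- The subgroup of an abelian group `A` generated by the elements `w·x − x` for an
action `ρ` of `W` on `A`; the quotient `A ⧸ twistSubgroup ρ` is the group of
coinvariants `A_W`. -/
def twistSubgroup {W A : Type*} [AddCommGroup A] (ρ : W → (A ≃+ A)) : AddSubgroup A :=
  AddSubgroup.closure {y : A | ∃ (w : W) (x : A), y = ρ w x - x}

/-- The subgroup `Hom(A, ℂˣ)^W` of `W`-invariant characters of `A`. -/
def invCharSubgroup {W A : Type*} [AddCommGroup A] (ρ : W → (A ≃+ A)) :
    AddSubgroup (A →+ Additive ℂˣ) where
  carrier := {φ | ∀ (w : W) (a : A), φ (ρ w a) = φ a}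
  add_mem' := by
    intro φ ψ hφ hψ w a
    simp only [AddMonoidHom.add_apply, hφ w a, hψ w a]
  zero_mem' := by intro w a; rfl
  neg_mem' := by
    intro φ hφ w a
    simp only [AddMonoidHom.neg_apply, hφ w a]

/-- The subgroup `Z` of `Hom(B, ℂˣ)` consisting of the characters pulled back from `C`
along a homomorphism `p : B →+ C`. -/
def pullbackCharSubgroup {B C : Type*} [AddCommGroup B] [AddCommGroup C] (p : B →+ C) :
    AddSubgroup (B →+ Additive ℂˣ) where
  carrier := {φ | ∃ ψ : C →+ Additive ℂˣ, φ = ψ.comp p}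
  add_mem' := by
    rintro _ _ ⟨ψ₁, rfl⟩ ⟨ψ₂, rfl⟩
    exact ⟨ψ₁ + ψ₂, by ext b; rfl⟩
  zero_mem' := ⟨0, by ext b; rfl⟩
  neg_mem' := by
    rintro _ ⟨ψ, rfl⟩
    exact ⟨-ψ, by ext b; rfl⟩

/-! ### Auxiliary material: `ℂˣ` is divisible, extension of characters, duality -/

noncomputable instance : RootableBy ℂˣ ℕ :=
  rootableByOfPowLeftSurj _ _ (fun {n} hn z => by
    obtain ⟨x, hx⟩ := IsAlgClosed.exists_pow_nat_eq (z : ℂ) (Nat.pos_of_ne_zero hn)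
    have hx0 : x ≠ 0 := by
      intro h
      rw [h, zero_pow hn] at hx
      exact z.ne_zero hx.symm
    exact ⟨Units.mk0 x hx0, Units.ext (by simp [hx])⟩)

noncomputable instance : RootableBy ℂˣ ℤ := Group.rootableByIntOfRootableByNat ℂˣ

noncomputable instance : DivisibleBy (Additive ℂˣ) ℤ where
  div a n := Additive.ofMul (RootableBy.root a.toMul n)
  div_zero a := by
    show Additive.ofMul _ = _
    rw [RootableBy.root_zero]
    rfl
  div_cancel a hn := by
    show (_ : ℤ) • Additive.ofMul _ = a
    rw [← ofMul_zpow, RootableBy.root_cancel _ hn]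
    rfl

/-- Every character of a subgroup of an abelian group extends to the whole group. -/
lemma char_extend {G : Type*} [AddCommGroup G] (S : AddSubgroup G) (χ : S →+ Additive ℂˣ) :
    ∃ φ : G →+ Additive ℂˣ, ∀ s : S, φ s = χ s := by
  obtain ⟨φ, hφ⟩ := (Module.Baer.of_divisible (Additive ℂˣ)).extension_property_addMonoidHom
    S.subtype Subtype.coe_injective χ
  exact ⟨φ, fun s => DFunLike.congr_fun hφ s⟩

/-- Duality for finite abelian groups: `Hom(G, ℂˣ)` is (noncanonically) equivalent to `G`. -/
lemma charFinEquiv (G : Type*) [AddCommGroup G] [Finite G] :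
    Nonempty ((G →+ Additive ℂˣ) ≃ G) := by
  haveI : NeZero ((Monoid.exponent (Multiplicative G) : ℂ)) :=
    ⟨by exact_mod_cast Monoid.exponent_ne_zero_of_finite⟩
  obtain ⟨e⟩ := CommGroup.monoidHom_mulEquiv_of_hasEnoughRootsOfUnity (Multiplicative G) ℂ
  exact ⟨(AddMonoidHom.toMultiplicativeLeft.trans e.toEquiv).trans Multiplicative.toAdd⟩

/-! ### Auxiliary lemmas on the twist subgroup and invariant characters -/

lemma mem_invChar {W G : Type*} [AddCommGroup G] (ρ : W → (G ≃+ G)) (φ : G →+ Additive ℂˣ) :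
    φ ∈ invCharSubgroup ρ ↔ ∀ (w : W) (a : G), φ (ρ w a) = φ a := Iff.rfl

lemma mem_pullbackChar {B C : Type*} [AddCommGroup B] [AddCommGroup C] (p : B →+ C)
    (φ : B →+ Additive ℂˣ) :
    φ ∈ pullbackCharSubgroup p ↔ ∃ ψ : C →+ Additive ℂˣ, φ = ψ.comp p := Iff.rfl

lemma twist_mem {W G : Type*} [AddCommGroup G] (ρ : W → (G ≃+ G)) (w : W) (x : G) :
    ρ w x - x ∈ twistSubgroup ρ := AddSubgroup.subset_closure ⟨w, x, rfl⟩

lemma twist_mk_eq {W G : Type*} [AddCommGroup G] (ρ : W → (G ≃+ G)) (w : W) (x : G) :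
    (QuotientAddGroup.mk (ρ w x) : G ⧸ twistSubgroup ρ) = QuotientAddGroup.mk x := by
  rw [QuotientAddGroup.eq]
  have := (twistSubgroup ρ).neg_mem (twist_mem ρ w x)
  simpa [neg_sub, neg_add_eq_sub] using this

lemma mem_invChar_iff_ker {W G : Type*} [AddCommGroup G] (ρ : W → (G ≃+ G))
    (φ : G →+ Additive ℂˣ) :
    φ ∈ invCharSubgroup ρ ↔ twistSubgroup ρ ≤ φ.ker := by
  rw [mem_invChar]
  constructor
  · intro h
    rw [twistSubgroup, AddSubgroup.closure_le]
    rintro y ⟨w, x, rfl⟩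
    simp only [SetLike.mem_coe, AddMonoidHom.mem_ker, map_sub, h w x, sub_self]
  · intro h w a
    have h2 := h (twist_mem ρ w a)
    rw [AddMonoidHom.mem_ker, map_sub, sub_eq_zero] at h2
    exact h2

/-- Characters of the coinvariants `G_W` correspond to invariant characters of `G`. -/
def invCharEquiv {W G : Type*} [AddCommGroup G] (ρ : W → (G ≃+ G)) :
    ((G ⧸ twistSubgroup ρ) →+ Additive ℂˣ) ≃ invCharSubgroup ρ where
  toFun ψ := ⟨ψ.comp (QuotientAddGroup.mk' _), by
    rw [mem_invChar]
    intro w a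
    simp only [AddMonoidHom.comp_apply, QuotientAddGroup.mk'_apply, twist_mk_eq]⟩
  invFun φ := QuotientAddGroup.lift _ φ.1 ((mem_invChar_iff_ker ρ φ.1).mp φ.2)
  left_inv ψ := by
    ext q
    rfl
  right_inv φ := by
    apply Subtype.ext
    ext a
    rfl

lemma card_invChar {W G : Type*} [AddCommGroup G] (ρ : W → (G ≃+ G))
    [Finite (G ⧸ twistSubgroup ρ)] :
    Finite (invCharSubgroup ρ) ∧
      Nat.card (invCharSubgroup ρ) = Nat.card (G ⧸ twistSubgroup ρ) := by
  obtain ⟨d⟩ := charFinEquiv (G ⧸ twistSubgroup ρ)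
  have e := (invCharEquiv ρ).symm.trans d
  exact ⟨Finite.of_equiv _ e.symm, Nat.card_congr e⟩

/-- Let `W` be a finite group and `0 → A → B → C → 0` a short exact
sequence of abelian groups with compatible `W`-actions, `W` acting trivially on `C`,
and with `A_W` finite.  Let `T = Hom(B, ℂˣ)` (with the contragredient action) and
`Z ⊆ T` the image of `Hom(C, ℂˣ)`.  Then `Z ⊆ T^W`, the groups `T^W/Z` and
`Hom(A, ℂˣ)^W` are finite, and `|Ker(A_W → B_W)| · |T^W/Z| = |Hom(A, ℂˣ)^W|`. -/
theorem card_ker_coinvariants_mul_card_quotient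
    {W A B C : Type*} [Group W] [Finite W]
    [AddCommGroup A] [AddCommGroup B] [AddCommGroup C]
    (ρA : W →* Multiplicative (AddAut A)) (ρB : W →* Multiplicative (AddAut B))
    (f : A →+ B) (p : B →+ C)
    (hf : Function.Injective f) (hp : Function.Surjective p)
    (hex : f.range = p.ker)
    -- the maps are `W`-equivariant, `W` acting trivially on `C`
    (hfe : ∀ (w : W) (a : A), f (ρA w a) = ρB w (f a))
    (hpe : ∀ (w : W) (b : B), p (ρB w b) = p b)
    -- `A_W` is finite
    (hAW : Finite (A ⧸ twistSubgroup (fun w : W => ρA w))) :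
    pullbackCharSubgroup p ≤ invCharSubgroup (fun w : W => ρB w) ∧
    Finite ((invCharSubgroup (fun w : W => ρB w)) ⧸
      ((pullbackCharSubgroup p).addSubgroupOf (invCharSubgroup (fun w : W => ρB w)))) ∧
    Finite (invCharSubgroup (fun w : W => ρA w)) ∧
    Nat.card {q : A ⧸ twistSubgroup (fun w : W => ρA w) //
        ∃ a : A, QuotientAddGroup.mk a = q ∧ f a ∈ twistSubgroup (fun w : W => ρB w)} *
      Nat.card ((invCharSubgroup (fun w : W => ρB w)) ⧸
        ((pullbackCharSubgroup p).addSubgroupOf (invCharSubgroup (fun w : W => ρB w)))) =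
      Nat.card (invCharSubgroup (fun w : W => ρA w)) := by
  classical
  -- Part 1: `Z ≤ T^W`.
  have hZle : pullbackCharSubgroup p ≤ invCharSubgroup (fun w : W => ρB w) := by
    intro φ hφ
    obtain ⟨ψ, rfl⟩ := (mem_pullbackChar p φ).mp hφ
    apply (mem_invChar _ _).mpr
    intro w b
    simp only [AddMonoidHom.comp_apply, hpe]
    exact congrArg ψ (hpe w b)
  -- Notation.
  set tA := twistSubgroup (fun w : W => ρA w) with htAdef
  set tB := twistSubgroup (fun w : W => ρB w) with htBdef
  haveI : Finite (A ⧸ tA) := hAW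
  -- The induced map `A_W → B_W`.
  have hcomap : tA ≤ tB.comap f := by
    rw [htAdef]; refine (AddSubgroup.closure_le _).mpr ?_
    rintro y ⟨w, x, rfl⟩
    simp only [SetLike.mem_coe, AddSubgroup.mem_comap, map_sub, hfe]
    convert twist_mem (fun w : W => ρB w) w (f x) using 2
    exact hfe w x
  set fbar : (A ⧸ tA) →+ (B ⧸ tB) := QuotientAddGroup.map tA tB f hcomap with hfbardef
  -- The induced map `B_W → C`.
  have hpker : tB ≤ p.ker := by
    rw [htBdef]; refine (AddSubgroup.closure_le _).mpr ?_
    rintro y ⟨w, x, rfl⟩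
    simp only [SetLike.mem_coe, AddMonoidHom.mem_ker, map_sub, hpe, sub_self]
    rw [sub_eq_zero]; exact hpe w x
  set pbar : (B ⧸ tB) →+ C := QuotientAddGroup.lift tB p hpker with hpbardef
  have hpbar_mk : ∀ b : B, pbar (QuotientAddGroup.mk b) = p b := fun b => rfl
  have hpbar_surj : Function.Surjective pbar := by
    intro c
    obtain ⟨b, rfl⟩ := hp c
    exact ⟨QuotientAddGroup.mk b, rfl⟩
  -- Exactness in the middle: `range fbar = ker pbar`.
  have hker_range : fbar.range = pbar.ker := by
    ext q
    constructor
    · rintro ⟨q', rfl⟩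
      induction q' using QuotientAddGroup.induction_on with
      | H a =>
        rw [AddMonoidHom.mem_ker, hfbardef, QuotientAddGroup.map_mk, hpbar_mk]
        have : f a ∈ p.ker := hex ▸ ⟨a, rfl⟩
        exact this
    · intro hq
      induction q using QuotientAddGroup.induction_on with
      | H b =>
        rw [AddMonoidHom.mem_ker, hpbar_mk] at hq
        have : b ∈ f.range := hex.symm ▸ hq
        obtain ⟨a, rfl⟩ := this
        exact ⟨QuotientAddGroup.mk a, by rw [hfbardef, QuotientAddGroup.map_mk]⟩
  -- Finiteness of kernel and range of `fbar`.
  haveI : Finite fbar.ker := Subtype.finite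
  haveI : Finite fbar.range :=
    Finite.of_equiv _ (QuotientAddGroup.quotientKerEquivRange fbar).toEquiv
  haveI hfinpker : Finite pbar.ker := by rw [← hker_range]; infer_instance
  -- The kernel subtype in the statement is `ker fbar`.
  have hiff : ∀ q : A ⧸ tA,
      (∃ a : A, QuotientAddGroup.mk a = q ∧ f a ∈ tB) ↔ q ∈ fbar.ker := by
    intro q
    constructor
    · rintro ⟨a, rfl, ha⟩
      rw [AddMonoidHom.mem_ker, hfbardef, QuotientAddGroup.map_mk]
      exact (QuotientAddGroup.eq_zero_iff _).mpr ha
    · intro hq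
      obtain ⟨a, rfl⟩ := QuotientAddGroup.mk_surjective q
      rw [AddMonoidHom.mem_ker, hfbardef, QuotientAddGroup.map_mk] at hq
      exact ⟨a, rfl, (QuotientAddGroup.eq_zero_iff _).mp hq⟩
  have h1 : Nat.card {q : A ⧸ tA // ∃ a : A, QuotientAddGroup.mk a = q ∧ f a ∈ tB} =
      Nat.card fbar.ker := Nat.card_congr (Equiv.subtypeEquivRight hiff)
  -- The invariant characters of `B` and the restriction map `Φ` to `ker pbar`.
  set TW := invCharSubgroup (fun w : W => ρB w) with hTWdef
  set liftB : TW → ((B ⧸ tB) →+ Additive ℂˣ) := fun φ =>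
    QuotientAddGroup.lift tB φ.1 ((mem_invChar_iff_ker _ φ.1).mp φ.2) with hliftBdef
  have liftB_mk : ∀ (φ : TW) (b : B), liftB φ (QuotientAddGroup.mk b) = φ.1 b :=
    fun _ _ => rfl
  have liftB_add : ∀ φ ψ : TW, liftB (φ + ψ) = liftB φ + liftB ψ := by
    intro φ ψ
    ext q
    simp [liftB_mk]
  have liftB_zero : liftB 0 = 0 := by
    ext q
    simp [liftB_mk]
  set Φ : TW →+ (pbar.ker →+ Additive ℂˣ) :=
    { toFun := fun φ => (liftB φ).comp pbar.ker.subtype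
      map_zero' := by
        show (liftB 0).comp pbar.ker.subtype = 0
        rw [liftB_zero]
        ext x
        rfl
      map_add' := by
        intro φ ψ
        show (liftB (φ + ψ)).comp pbar.ker.subtype = _
        rw [liftB_add]
        ext x
        rfl } with hΦdef
  have hΦ_apply : ∀ (φ : TW) (x : pbar.ker), Φ φ x = liftB φ x.1 := fun _ _ => rfl
  -- `Φ` is surjective (extension of characters).
  have hΦsurj : Function.Surjective Φ := by
    intro χ
    obtain ⟨Ψ, hΨ⟩ := char_extend pbar.ker χ
    set φ0 : B →+ Additive ℂˣ := Ψ.comp (QuotientAddGroup.mk' tB) with hφ0def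
    have hφ0 : φ0 ∈ TW := by
      rw [hTWdef]; apply (mem_invChar _ _).mpr
      intro w b
      show Ψ (QuotientAddGroup.mk (ρB w b)) = Ψ (QuotientAddGroup.mk b)
      exact congrArg Ψ (twist_mk_eq (fun w : W => ρB w) w b)
    refine ⟨⟨φ0, hφ0⟩, ?_⟩
    have hl : liftB ⟨φ0, hφ0⟩ = Ψ := by
      ext q
      rfl
    refine AddMonoidHom.ext fun x => ?_
    rw [hΦ_apply, hl]
    exact hΨ x
  -- The kernel of `Φ` is `Z` (viewed inside `T^W`).
  have hΦker : Φ.ker = (pullbackCharSubgroup p).addSubgroupOf TW := by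
    ext φ
    rw [AddMonoidHom.mem_ker, AddSubgroup.mem_addSubgroupOf, mem_pullbackChar]
    constructor
    · intro h0
      have hker : p.ker ≤ (φ.1 : B →+ Additive ℂˣ).ker := by
        intro b hb
        have hb' : (QuotientAddGroup.mk b : B ⧸ tB) ∈ pbar.ker := by
          rw [AddMonoidHom.mem_ker, hpbar_mk]
          exact hb
        have h2 := DFunLike.congr_fun h0 (⟨_, hb'⟩ : pbar.ker)
        rw [AddMonoidHom.mem_ker]
        exact h2
      refine ⟨p.liftOfRightInverse (Function.surjInv hp) (Function.rightInverse_surjInv hp)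
        ⟨φ.1, hker⟩, ?_⟩
      refine AddMonoidHom.ext fun b => ?_
      have hb := AddMonoidHom.liftOfRightInverse_comp_apply p (Function.surjInv hp)
        (Function.rightInverse_surjInv hp) ⟨φ.1, hker⟩ b
      exact hb.symm
    · rintro ⟨ψ, hψ⟩
      refine AddMonoidHom.ext fun x => ?_
      obtain ⟨q, hq⟩ := x
      revert hq
      induction q using QuotientAddGroup.induction_on with
      | H b =>
        intro hq
        have hpb : p b = 0 := by rwa [AddMonoidHom.mem_ker, hpbar_mk] at hq
        show liftB φ (QuotientAddGroup.mk b) = 0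
        rw [liftB_mk, hψ]
        show ψ (p b) = 0
        rw [hpb, map_zero]
  -- First isomorphism theorem: `T^W / Z ≃ Hom(ker pbar, ℂˣ)`.
  have eTW : (TW ⧸ (pullbackCharSubgroup p).addSubgroupOf TW) ≃+ (pbar.ker →+ Additive ℂˣ) :=
    (QuotientAddGroup.quotientAddEquivOfEq hΦker.symm).trans
      (QuotientAddGroup.quotientKerEquivOfSurjective Φ hΦsurj)
  obtain ⟨dK⟩ := charFinEquiv pbar.ker
  haveI hfinTW : Finite (TW ⧸ (pullbackCharSubgroup p).addSubgroupOf TW) :=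
    Finite.of_equiv _ (eTW.toEquiv.trans dK).symm
  have h2 : Nat.card (TW ⧸ (pullbackCharSubgroup p).addSubgroupOf TW) = Nat.card pbar.ker :=
    Nat.card_congr (eTW.toEquiv.trans dK)
  -- Counting on the `A` side.
  obtain ⟨hfinA, h5⟩ := card_invChar (fun w : W => ρA w)
  have h3 : Nat.card pbar.ker = Nat.card fbar.range := by rw [← hker_range]
  have h4 : Nat.card fbar.ker * Nat.card fbar.range = Nat.card (A ⧸ tA) := by
    rw [mul_comm,
      ← Nat.card_congr (QuotientAddGroup.quotientKerEquivRange fbar).toEquiv]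
    exact (AddSubgroup.card_eq_card_quotient_mul_card_addSubgroup fbar.ker).symm
  refine ⟨hZle, hfinTW, hfinA, ?_⟩
  rw [h1, h2, h3, h4, h5]
end
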